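/- arXiv:1811.00603 — 7 statements merged into one kernel-verified Lean document; each statement's English description precedes it below -/
import Mathlib

section
/- Let X be a real normed space and n ≥ 2. There exists a map r from the collection of nonempty subsets of X with at most n elements to the collection of nonempty subsets of X with at most n−1 elements such that r(x) = x whenever x has at most n−1 elements, and for all nonempty x, y ⊆ X with at most n elements: d_H(r(x), r(y)) ≤ n(2n−1) · diam(x ∪ y)^{1 − 1/(2n−1)} · d_H(x, y)^{1/(2n−1)}. In particular, r is a retraction X(n) → X(n−1) that is Hölder continuous with exponent 1/(2n−1) on bounded subsets of X(n). -/
open scoped Classical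
set_option linter.unusedSectionVars false
set_option maxHeartbeats 1000000
open Finset Metric Real

noncomputable section
namespace Stmt12

variable {X : Type*} [NormedAddCommGroup X] [NormedSpace ℝ X]

/-- all pairwise distances (including zero ones) -/
def distF (s : Finset X) : Finset ℝ := (s ×ˢ s).image fun z => dist z.1 z.2

/-- threshold graph on the elements of `s` -/
def G (s : Finset X) (t : ℝ) : SimpleGraph {a // a ∈ s} where
  Adj a b := a ≠ b ∧ dist (a : X) (b : X) ≤ t
  symm := by
    constructor; intro a b h
    exact ⟨h.1.symm, by rw [dist_comm]; exact h.2⟩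
  loopless := by constructor; intro a h; exact h.1 rfl

/-- reachability at threshold `t` -/
def Reach (s : Finset X) (t : ℝ) (p q : X) : Prop :=
  ∃ (hp : p ∈ s) (hq : q ∈ s), (G s t).Reachable ⟨p, hp⟩ ⟨q, hq⟩

/-- minimax connectivity distance within `s` -/
def tau (s : Finset X) (p q : X) : ℝ :=
  if h : ((distF s).filter (fun d => Reach s d p q)).Nonempty then
    ((distF s).filter (fun d => Reach s d p q)).min' h
  else 0

lemma dist_mem_distF {s : Finset X} {p q : X} (hp : p ∈ s) (hq : q ∈ s) :
    dist p q ∈ distF s := by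
  exact Finset.mem_image.2 ⟨(p, q), Finset.mem_product.2 ⟨hp, hq⟩, rfl⟩

lemma distF_nonneg {s : Finset X} {d : ℝ} (hd : d ∈ distF s) : 0 ≤ d := by
  rcases Finset.mem_image.1 hd with ⟨z, _, rfl⟩
  exact dist_nonneg

lemma reach_refl {s : Finset X} {p : X} (hp : p ∈ s) (t : ℝ) : Reach s t p p :=
  ⟨hp, hp, SimpleGraph.Reachable.refl _⟩

lemma reach_edge {s : Finset X} {p q : X} (hp : p ∈ s) (hq : q ∈ s) (hne : p ≠ q) :
    Reach s (dist p q) p q := by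
  refine ⟨hp, hq, SimpleGraph.Adj.reachable ?_⟩
  exact ⟨by simp [Subtype.ext_iff, hne], le_refl _⟩

lemma reach_mono {s : Finset X} {t t' : ℝ} (h : t ≤ t') {p q : X} (hr : Reach s t p q) :
    Reach s t' p q := by
  obtain ⟨hp, hq, hw⟩ := hr
  refine ⟨hp, hq, hw.mono ?_⟩
  intro a b hab
  exact ⟨hab.1, hab.2.trans h⟩

lemma reach_symm {s : Finset X} {t : ℝ} {p q : X} (hr : Reach s t p q) : Reach s t q p := by
  obtain ⟨hp, hq, hw⟩ := hr
  exact ⟨hq, hp, hw.symm⟩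

lemma reach_trans {s : Finset X} {t : ℝ} {p q r : X} (h1 : Reach s t p q) (h2 : Reach s t q r) :
    Reach s t p r := by
  obtain ⟨hp, hq, hw1⟩ := h1
  obtain ⟨hq', hr, hw2⟩ := h2
  exact ⟨hp, hr, hw1.trans hw2⟩

/-- walks can be shortcut to a threshold that is an actual pairwise distance -/
lemma walk_attained {s : Finset X} {t : ℝ} (ht : 0 ≤ t) :
    ∀ {a b : {z // z ∈ s}} (_ : (G s t).Walk a b),
      ∃ d ∈ distF s, d ≤ t ∧ Reach s d (a : X) (b : X) := by
  intro a b w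
  induction w with
  | nil =>
    rename_i a
    exact ⟨dist (a : X) (a : X), dist_mem_distF a.2 a.2, by simp [ht],
      reach_refl a.2 _⟩
  | @cons a b c hadj w ih =>
    obtain ⟨d', hd'mem, hd'le, hd'reach⟩ := ih
    refine ⟨max (dist (a : X) (b : X)) d', ?_, ?_, ?_⟩
    · rcases max_cases (dist (a : X) (b : X)) d' with ⟨he, _⟩ | ⟨he, _⟩
      · rw [he]; exact dist_mem_distF a.2 b.2
      · rw [he]; exact hd'mem
    · exact max_le hadj.2 hd'le
    · refine reach_trans (q := (b : X)) ?_ (reach_mono (le_max_right _ _) hd'reach)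
      exact ⟨a.2, b.2, SimpleGraph.Adj.reachable ⟨hadj.1, le_max_left _ _⟩⟩

lemma reach_attained {s : Finset X} {t : ℝ} (ht : 0 ≤ t) {p q : X} (hr : Reach s t p q) :
    ∃ d ∈ distF s, d ≤ t ∧ Reach s d p q := by
  obtain ⟨hp, hq, ⟨w⟩⟩ := hr
  exact walk_attained ht w

lemma tau_reach {s : Finset X} {p q : X} (hp : p ∈ s) (hq : q ∈ s) :
    Reach s (tau s p q) p q ∧ tau s p q ∈ distF s := by
  have hne : ((distF s).filter (fun d => Reach s d p q)).Nonempty := by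
    by_cases hpq : p = q
    · subst hpq
      exact ⟨dist p p, Finset.mem_filter.2 ⟨dist_mem_distF hp hp, reach_refl hp _⟩⟩
    · exact ⟨dist p q, Finset.mem_filter.2 ⟨dist_mem_distF hp hq, reach_edge hp hq hpq⟩⟩
  rw [tau, dif_pos hne]
  have := Finset.min'_mem _ hne
  rw [Finset.mem_filter] at this
  exact ⟨this.2, this.1⟩

lemma tau_nonneg {s : Finset X} {p q : X} (hp : p ∈ s) (hq : q ∈ s) : 0 ≤ tau s p q :=
  distF_nonneg (tau_reach hp hq).2

lemma tau_le_of_reach {s : Finset X} {p q : X} {t : ℝ} (ht : 0 ≤ t)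
    (hr : Reach s t p q) : tau s p q ≤ t := by
  obtain ⟨d, hdmem, hdle, hdreach⟩ := reach_attained ht hr
  have hne : ((distF s).filter (fun d => Reach s d p q)).Nonempty :=
    ⟨d, Finset.mem_filter.2 ⟨hdmem, hdreach⟩⟩
  rw [tau, dif_pos hne]
  exact le_trans (Finset.min'_le _ d (Finset.mem_filter.2 ⟨hdmem, hdreach⟩)) hdle

lemma reach_tau_le {s : Finset X} {p q : X} (hp : p ∈ s) (hq : q ∈ s) {t : ℝ}
    (h : tau s p q ≤ t) : Reach s t p q :=
  reach_mono h (tau_reach hp hq).1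

lemma tau_self {s : Finset X} {p : X} (hp : p ∈ s) : tau s p p = 0 :=
  le_antisymm (tau_le_of_reach le_rfl (reach_refl hp 0)) (tau_nonneg hp hp)

lemma tau_le_dist {s : Finset X} {p q : X} (hp : p ∈ s) (hq : q ∈ s) :
    tau s p q ≤ dist p q := by
  by_cases hpq : p = q
  · subst hpq; simp [tau_self hp]
  · exact tau_le_of_reach dist_nonneg (reach_edge hp hq hpq)

lemma tau_ultra {s : Finset X} {p q r : X} (hp : p ∈ s) (hq : q ∈ s) (hr : r ∈ s) :
    tau s p r ≤ max (tau s p q) (tau s q r) := by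
  have h0 : (0:ℝ) ≤ max (tau s p q) (tau s q r) :=
    le_trans (tau_nonneg hp hq) (le_max_left _ _)
  refine tau_le_of_reach h0 (reach_trans (q := q) ?_ ?_)
  · exact reach_tau_le hp hq (le_max_left _ _)
  · exact reach_tau_le hq hr (le_max_right _ _)

lemma tau_symm {s : Finset X} {p q : X} (hp : p ∈ s) (hq : q ∈ s) :
    tau s p q = tau s q p := by
  refine le_antisymm ?_ ?_
  · exact tau_le_of_reach (tau_nonneg hq hp) (reach_symm (tau_reach hq hp).1)
  · exact tau_le_of_reach (tau_nonneg hp hq) (reach_symm (tau_reach hp hq).1)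


/-- distance along a walk -/
lemma walk_dist {s : Finset X} {t : ℝ} :
    ∀ {a b : {z // z ∈ s}} (w : (G s t).Walk a b),
      dist (a : X) (b : X) ≤ w.length * t := by
  intro a b w
  induction w with
  | nil => simp
  | @cons a b c hadj w ih =>
    calc dist (a : X) (c : X) ≤ dist (a : X) (b : X) + dist (b : X) (c : X) :=
          dist_triangle _ _ _
    _ ≤ t + w.length * t := add_le_add hadj.2 ih
    _ = (SimpleGraph.Walk.cons hadj w).length * t := by
        simp [SimpleGraph.Walk.length_cons]; ring

lemma dist_le_card_tau {s : Finset X} {p q : X} (hp : p ∈ s) (hq : q ∈ s) :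
    dist p q ≤ ((s.card : ℝ) - 1) * tau s p q := by
  have htau0 : 0 ≤ tau s p q := tau_nonneg hp hq
  obtain ⟨hp', hq', ⟨w⟩⟩ := (tau_reach hp hq).1
  have hpath : (w.bypass).IsPath := SimpleGraph.Walk.bypass_isPath w
  have hlen : (w.bypass).length < s.card := by
    have := hpath.length_lt
    rwa [Fintype.card_coe] at this
  have hd : dist p q ≤ ((w.bypass).length : ℝ) * tau s p q := walk_dist w.bypass
  refine hd.trans (mul_le_mul_of_nonneg_right ?_ htau0)
  have h1 : (w.bypass).length + 1 ≤ s.card := Nat.succ_le_of_lt hlen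
  have h2 : ((w.bypass).length : ℝ) + 1 ≤ (s.card : ℝ) := by exact_mod_cast h1
  linarith

/-- positive pairwise distances -/
def gapF (s : Finset X) : Finset ℝ := s.offDiag.image fun z => dist z.1 z.2

/-- minimal positive pairwise distance (junk value 1) -/
def gap (s : Finset X) : ℝ :=
  if h : (gapF s).Nonempty then (gapF s).min' h else 1

lemma gapF_nonempty {s : Finset X} (h : 1 < s.card) : (gapF s).Nonempty := by
  obtain ⟨a, ha, b, hb, hab⟩ := Finset.one_lt_card.1 h
  exact ⟨dist a b, Finset.mem_image.2 ⟨(a, b), Finset.mem_offDiag.2 ⟨ha, hb, hab⟩, rfl⟩⟩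

lemma gap_le_dist {s : Finset X} {p q : X} (hp : p ∈ s) (hq : q ∈ s) (hne : p ≠ q) :
    gap s ≤ dist p q := by
  have hmem : dist p q ∈ gapF s :=
    Finset.mem_image.2 ⟨(p, q), Finset.mem_offDiag.2 ⟨hp, hq, hne⟩, rfl⟩
  rw [gap, dif_pos ⟨_, hmem⟩]
  exact Finset.min'_le _ _ hmem

lemma gap_pos {s : Finset X} (h : 1 < s.card) : 0 < gap s := by
  rw [gap, dif_pos (gapF_nonempty h)]
  have hmem := Finset.min'_mem _ (gapF_nonempty h)
  rcases Finset.mem_image.1 hmem with ⟨z, hz, he⟩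
  rw [← he]
  exact dist_pos.2 (Finset.mem_offDiag.1 hz).2.2

lemma gap_attained {s : Finset X} (h : 1 < s.card) :
    ∃ p ∈ s, ∃ q ∈ s, p ≠ q ∧ dist p q = gap s := by
  rw [gap, dif_pos (gapF_nonempty h)]
  have hmem := Finset.min'_mem _ (gapF_nonempty h)
  rcases Finset.mem_image.1 hmem with ⟨z, hz, he⟩
  rcases Finset.mem_offDiag.1 hz with ⟨h1, h2, h3⟩
  exact ⟨z.1, h1, z.2, h2, h3, he⟩

lemma gap_le_tau {s : Finset X} {p q : X} (hp : p ∈ s) (hq : q ∈ s) (hne : p ≠ q) :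
    gap s ≤ tau s p q := by
  obtain ⟨hp', hq', ⟨w⟩⟩ := (tau_reach hp hq).1
  cases w with
  | nil => exact (hne rfl).elim
  | cons hadj w =>
    refine (gap_le_dist ?_ ?_ ?_).trans hadj.2
    · exact hp
    · exact (Subtype.mem _)
    · exact fun hh => hadj.1 (Subtype.ext hh)

/-- weights -/
def wt (s : Finset X) (p q : X) : ℝ :=
  Real.exp (-(max (tau s p q) (gap s) - gap s) / gap s)

def psi (s : Finset X) (p : X) : X :=
  (∑ q ∈ s, wt s p q)⁻¹ • ∑ q ∈ s, wt s p q • q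

lemma wt_pos (s : Finset X) (p q : X) : 0 < wt s p q := Real.exp_pos _

lemma L1 {g u : ℝ} (hg : 0 < g) (hu : 0 ≤ u) : Real.exp (-u/g) * (g + u) ≤ g := by
  have h1 : 1 + u/g ≤ Real.exp (u/g) := by
    have := Real.add_one_le_exp (u/g)
    linarith
  have h2 : g + u = g * (1 + u/g) := by field_simp
  rw [h2, ← mul_assoc, mul_comm (Real.exp (-u/g)) g, mul_assoc]
  have h3 : Real.exp (-u/g) * (1 + u/g) ≤ 1 := by
    have hpos : 0 < Real.exp (-u/g) := Real.exp_pos _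
    have h4 := mul_le_mul_of_nonneg_left h1 hpos.le
    rw [← Real.exp_add] at h4
    have h5 : -u/g + u/g = 0 := by ring
    rw [h5, Real.exp_zero] at h4
    exact h4
  nlinarith [hg.le]

lemma wt_le_one {s : Finset X} (hg : 0 < gap s) (p q : X) : wt s p q ≤ 1 := by
  rw [wt]
  refine Real.exp_le_one_iff.2 ?_
  have h1 : gap s ≤ max (tau s p q) (gap s) := le_max_right _ _
  apply div_nonpos_of_nonpos_of_nonneg <;> linarith

lemma wt_self {s : Finset X} (hg : 0 < gap s) {p : X} (hp : p ∈ s) : wt s p p = 1 := by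
  rw [wt, tau_self hp, max_eq_right hg.le]
  simp

lemma Wsum_ge_one {s : Finset X} (hg : 0 < gap s) {p : X} (hp : p ∈ s) :
    1 ≤ ∑ q ∈ s, wt s p q := by
  have h := Finset.single_le_sum (f := fun q => wt s p q)
    (fun q _ => (wt_pos s p q).le) hp
  rwa [wt_self hg hp] at h

lemma Wsum_pos {s : Finset X} (hg : 0 < gap s) {p : X} (hp : p ∈ s) :
    0 < ∑ q ∈ s, wt s p q := lt_of_lt_of_le one_pos (Wsum_ge_one hg hp)

/-- key rewriting of `psi` relative to an anchor -/
lemma psi_sub (s : Finset X) (hg : 0 < gap s) {p : X} (hp : p ∈ s) (z : X) :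
    psi s p - z = (∑ q ∈ s, wt s p q)⁻¹ • ∑ q ∈ s, wt s p q • (q - z) := by
  have hW : (∑ q ∈ s, wt s p q) ≠ 0 := (Wsum_pos hg hp).ne'
  rw [psi]
  have h1 : ∑ q ∈ s, wt s p q • (q - z)
      = (∑ q ∈ s, wt s p q • q) - (∑ q ∈ s, wt s p q) • z := by
    rw [Finset.sum_smul]
    rw [← Finset.sum_sub_distrib]
    congr 1
    ext q
    rw [smul_sub]
  rw [h1, smul_sub, smul_smul, inv_mul_cancel₀ hW, one_smul]

lemma psi_dist_le {s : Finset X} (hg : 0 < gap s) {p : X} (hp : p ∈ s) {z : X} {R : ℝ}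
    (h : ∀ q ∈ s, dist q z ≤ R) : dist (psi s p) z ≤ R := by
  have hW : 0 < ∑ q ∈ s, wt s p q := Wsum_pos hg hp
  rw [dist_eq_norm, psi_sub s hg hp z, norm_smul]
  have h1 : ‖∑ q ∈ s, wt s p q • (q - z)‖ ≤ ∑ q ∈ s, wt s p q * R := by
    refine (norm_sum_le _ _).trans ?_
    refine Finset.sum_le_sum fun q hq => ?_
    rw [norm_smul, Real.norm_eq_abs, abs_of_pos (wt_pos s p q)]
    refine mul_le_mul_of_nonneg_left ?_ (wt_pos s p q).le
    rw [← dist_eq_norm]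
    exact h q hq
  calc ‖(∑ q ∈ s, wt s p q)⁻¹‖ * ‖∑ q ∈ s, wt s p q • (q - z)‖
      ≤ (∑ q ∈ s, wt s p q)⁻¹ * (∑ q ∈ s, wt s p q * R) := by
        rw [Real.norm_eq_abs, abs_of_pos (inv_pos.2 hW)]
        exact mul_le_mul_of_nonneg_left h1 (inv_pos.2 hW).le
    _ = R := by
        rw [← Finset.sum_mul, inv_mul_eq_div, mul_comm, mul_div_assoc, div_self hW.ne',
          mul_one]

lemma psi_move {s : Finset X} (hcard : 1 < s.card) {p : X} (hp : p ∈ s) :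
    dist (psi s p) p ≤ ((s.card : ℝ) - 1) ^ 2 * gap s := by
  have hg : 0 < gap s := gap_pos hcard
  have hW : 0 < ∑ q ∈ s, wt s p q := Wsum_pos hg hp
  have hWinv : (∑ q ∈ s, wt s p q)⁻¹ ≤ 1 := by
    rw [inv_le_one_iff₀]
    right; exact Wsum_ge_one hg hp
  rw [dist_eq_norm, psi_sub s hg hp p, norm_smul]
  have hterm : ∀ q ∈ s.erase p, wt s p q * ‖q - p‖ ≤ ((s.card : ℝ) - 1) * gap s := by
    intro q hq
    obtain ⟨hqne, hqs⟩ := Finset.mem_erase.1 hq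
    have htg : gap s ≤ tau s p q := gap_le_tau hp hqs (Ne.symm hqne)
    have hub : ‖q - p‖ ≤ ((s.card : ℝ) - 1) * tau s p q := by
      rw [← dist_eq_norm, dist_comm]
      exact dist_le_card_tau hp hqs
    have hwt : wt s p q * tau s p q ≤ gap s := by
      have : max (tau s p q) (gap s) = tau s p q := max_eq_left htg
      rw [wt, this]
      have h0 : tau s p q = gap s + (tau s p q - gap s) := by ring
      calc Real.exp (-(tau s p q - gap s) / gap s) * tau s p q
          = Real.exp (-(tau s p q - gap s) / gap s) * (gap s + (tau s p q - gap s)) := by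
            rw [← h0]
        _ ≤ gap s := L1 hg (by linarith)
    have hcard1 : (0:ℝ) ≤ (s.card : ℝ) - 1 := by
      have : (1:ℝ) ≤ (s.card : ℝ) := by exact_mod_cast hcard.le
      linarith
    calc wt s p q * ‖q - p‖ ≤ wt s p q * (((s.card : ℝ) - 1) * tau s p q) :=
          mul_le_mul_of_nonneg_left hub (wt_pos s p q).le
      _ = ((s.card : ℝ) - 1) * (wt s p q * tau s p q) := by ring
      _ ≤ ((s.card : ℝ) - 1) * gap s := mul_le_mul_of_nonneg_left hwt hcard1
  have h1 : ‖∑ q ∈ s, wt s p q • (q - p)‖ ≤ ((s.card : ℝ) - 1) ^ 2 * gap s := by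
    have hsplit : ∑ q ∈ s, wt s p q • (q - p)
        = ∑ q ∈ s.erase p, wt s p q • (q - p) := by
      rw [← Finset.add_sum_erase _ _ hp]
      simp
    rw [hsplit]
    refine (norm_sum_le _ _).trans ?_
    have hb : ∀ q ∈ s.erase p, ‖wt s p q • (q - p)‖ ≤ ((s.card : ℝ) - 1) * gap s := by
      intro q hq
      rw [norm_smul, Real.norm_eq_abs, abs_of_pos (wt_pos s p q)]
      exact hterm q hq
    refine (Finset.sum_le_sum hb).trans ?_
    rw [Finset.sum_const, nsmul_eq_mul]
    have hc : (s.erase p).card = s.card - 1 := Finset.card_erase_of_mem hp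
    have hcc : ((s.erase p).card : ℝ) = (s.card : ℝ) - 1 := by
      rw [hc]
      have : 1 ≤ s.card := hcard.le.trans' (by norm_num)
      push_cast [Nat.cast_sub this]
      ring
    rw [hcc]
    ring_nf
    nlinarith [gap_pos hcard, Finset.card_erase_of_mem hp]
  calc ‖(∑ q ∈ s, wt s p q)⁻¹‖ * ‖∑ q ∈ s, wt s p q • (q - p)‖
      ≤ 1 * (((s.card : ℝ) - 1) ^ 2 * gap s) := by
        refine mul_le_mul ?_ h1 (norm_nonneg _) one_pos.le
        rw [Real.norm_eq_abs, abs_of_pos (inv_pos.2 hW)]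
        exact hWinv
    _ = ((s.card : ℝ) - 1) ^ 2 * gap s := one_mul _

/-- the two closest points have identical weight profiles, hence equal images -/
lemma psi_merge {s : Finset X} (hcard : 1 < s.card) :
    ∃ p₀ ∈ s, ∃ q₀ ∈ s, p₀ ≠ q₀ ∧ psi s p₀ = psi s q₀ := by
  obtain ⟨p₀, hp₀, q₀, hq₀, hne, hdist⟩ := gap_attained hcard
  have hg : 0 < gap s := gap_pos hcard
  refine ⟨p₀, hp₀, q₀, hq₀, hne, ?_⟩
  have hwt : ∀ r ∈ s, wt s p₀ r = wt s q₀ r := by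
    intro r hr
    rw [wt, wt]
    congr 2
    by_cases h1 : r = p₀
    · subst h1
      rw [tau_self hp₀, max_eq_right hg.le]
      have ht1 : tau s q₀ r ≤ gap s := by
        rw [← hdist, dist_comm]
        exact tau_le_dist hq₀ hp₀
      rw [max_eq_right ht1]
    · by_cases h2 : r = q₀
      · subst h2
        rw [tau_self hq₀, max_eq_right hg.le]
        have ht1 : tau s p₀ r ≤ gap s := by
          rw [← hdist]
          exact tau_le_dist hp₀ hq₀
        rw [max_eq_right ht1]
      · have ht1 : gap s ≤ tau s p₀ r := gap_le_tau hp₀ hr (Ne.symm h1)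
        have ht2 : gap s ≤ tau s q₀ r := gap_le_tau hq₀ hr (Ne.symm h2)
        have htpq : tau s p₀ q₀ ≤ gap s := by rw [← hdist]; exact tau_le_dist hp₀ hq₀
        have hu1 : tau s p₀ r ≤ tau s q₀ r := by
          refine (tau_ultra hp₀ hq₀ hr).trans ?_
          exact max_le (htpq.trans ht2) le_rfl
        have hu2 : tau s q₀ r ≤ tau s p₀ r := by
          have htqp : tau s q₀ p₀ ≤ gap s := by
            rw [tau_symm hq₀ hp₀, ← hdist]
            exact tau_le_dist hp₀ hq₀
          refine (tau_ultra hq₀ hp₀ hr).trans ?_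
          exact max_le (htqp.trans ht1) le_rfl
        rw [le_antisymm hu1 hu2]
  have hsum1 : ∑ q ∈ s, wt s p₀ q = ∑ q ∈ s, wt s q₀ q :=
    Finset.sum_congr rfl fun r hr => hwt r hr
  have hsum2 : ∑ q ∈ s, wt s p₀ q • q = ∑ q ∈ s, wt s q₀ q • q :=
    Finset.sum_congr rfl fun r hr => by rw [hwt r hr]
  rw [psi, psi, hsum1, hsum2]


/-! ### The retraction -/

def Fmap (n : ℕ) (s : Finset X) : Finset X :=
  if s.card = n then s.image (psi s) else s

def rmap (n : ℕ) (x : Set X) : Set X :=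
  if h : x.Finite then ↑(Fmap n h.toFinset) else x

lemma rmap_of_finite (n : ℕ) {x : Set X} (hfx : x.Finite) :
    rmap n x = ↑(Fmap n hfx.toFinset) := dif_pos hfx

lemma Fmap_of_card {n : ℕ} {s : Finset X} (h : s.card = n) :
    Fmap n s = s.image (psi s) := if_pos h

lemma Fmap_of_ne {n : ℕ} {s : Finset X} (h : s.card ≠ n) : Fmap n s = s := if_neg h

lemma Fmap_nonempty {n : ℕ} {s : Finset X} (h : s.Nonempty) : (Fmap n s).Nonempty := by
  rw [Fmap]
  split
  · exact h.image _
  · exact h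

lemma Fmap_card_le {n : ℕ} (hn : 2 ≤ n) (s : Finset X) : (Fmap n s).card ≤ n - 1 ∨ Fmap n s = s := by
  by_cases h : s.card = n
  · left
    rw [Fmap_of_card h]
    have hcard : 1 < s.card := by omega
    obtain ⟨p₀, hp₀, q₀, hq₀, hne, hpsi⟩ := psi_merge hcard
    have hsub : s.image (psi s) ⊆ (s.erase q₀).image (psi s) := by
      intro u hu
      rcases Finset.mem_image.1 hu with ⟨r, hr, rfl⟩
      by_cases hrq : r = q₀
      · subst hrq
        exact Finset.mem_image.2 ⟨p₀, Finset.mem_erase.2 ⟨hne, hp₀⟩, hpsi⟩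
      · exact Finset.mem_image.2 ⟨r, Finset.mem_erase.2 ⟨hrq, hr⟩, rfl⟩
    calc (s.image (psi s)).card ≤ ((s.erase q₀).image (psi s)).card :=
          Finset.card_le_card hsub
      _ ≤ (s.erase q₀).card := Finset.card_image_le
      _ = s.card - 1 := Finset.card_erase_of_mem hq₀
      _ = n - 1 := by rw [h]
  · right; exact Fmap_of_ne h

/-! ### Set-level facts -/

lemma finite_of_encard_le {x : Set X} {n : ℕ} (h : x.encard ≤ n) : x.Finite := by
  by_contra hinf
  rw [Set.Infinite.encard_eq hinf] at h
  exact absurd h (by simp)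

lemma toFinset_card_le {x : Set X} {n : ℕ} (hfx : x.Finite) (h : x.encard ≤ n) :
    hfx.toFinset.card ≤ n := by
  rw [Set.Finite.encard_eq_coe_toFinset_card hfx] at h
  exact_mod_cast h

lemma rmap_retract {n : ℕ} (hn : 2 ≤ n) {x : Set X} (hne : x.Nonempty)
    (h : x.encard ≤ (n : ℕ∞) - 1) : rmap n x = x := by
  have h' : x.encard ≤ ((n - 1 : ℕ) : ℕ∞) := by
    rwa [ENat.coe_sub, Nat.cast_one]
  have hfx := finite_of_encard_le h'
  have hcard : hfx.toFinset.card ≤ n - 1 := toFinset_card_le hfx h'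
  rw [rmap_of_finite n hfx, Fmap_of_ne (by omega), Set.Finite.coe_toFinset]

lemma rmap_spec1 {n : ℕ} (hn : 2 ≤ n) {x : Set X} (hne : x.Nonempty)
    (h : x.encard ≤ n) : (rmap n x).Nonempty ∧ (rmap n x).encard ≤ (n : ℕ∞) - 1 := by
  have hfx := finite_of_encard_le h
  have hcard : hfx.toFinset.card ≤ n := toFinset_card_le hfx h
  rw [rmap_of_finite n hfx]
  have hsne : hfx.toFinset.Nonempty := by
    rwa [Set.Finite.toFinset_nonempty]
  constructor
  · exact Finset.coe_nonempty.2 (Fmap_nonempty hsne)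
  · rcases Fmap_card_le hn hfx.toFinset with hle | heq
    · rw [Set.encard_coe_eq_coe_finsetCard]
      calc ((Fmap n hfx.toFinset).card : ℕ∞) ≤ ((n - 1 : ℕ) : ℕ∞) := by exact_mod_cast hle
        _ = (n : ℕ∞) - 1 := by rw [ENat.coe_sub, Nat.cast_one]
    · rw [heq, Set.encard_coe_eq_coe_finsetCard]
      have hlt : hfx.toFinset.card ≤ n - 1 := by
        by_contra hc
        have : hfx.toFinset.card = n := by omega
        rw [Fmap_of_card this] at heq
        have := psi_merge (by omega : 1 < hfx.toFinset.card)
        obtain ⟨p₀, hp₀, q₀, hq₀, hnepq, hpsi⟩ := this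
        have hsub : hfx.toFinset.image (psi hfx.toFinset) ⊆
            (hfx.toFinset.erase q₀).image (psi hfx.toFinset) := by
          intro u hu
          rcases Finset.mem_image.1 hu with ⟨r, hr, rfl⟩
          by_cases hrq : r = q₀
          · subst hrq
            exact Finset.mem_image.2 ⟨p₀, Finset.mem_erase.2 ⟨hnepq, hp₀⟩, hpsi⟩
          · exact Finset.mem_image.2 ⟨r, Finset.mem_erase.2 ⟨hrq, hr⟩, rfl⟩
        have h1 : hfx.toFinset.card ≤ hfx.toFinset.card - 1 := by
          calc hfx.toFinset.card = (hfx.toFinset.image (psi hfx.toFinset)).card := by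
                rw [heq]
            _ ≤ ((hfx.toFinset.erase q₀).image (psi hfx.toFinset)).card :=
                Finset.card_le_card hsub
            _ ≤ (hfx.toFinset.erase q₀).card := Finset.card_image_le
            _ = hfx.toFinset.card - 1 := Finset.card_erase_of_mem hq₀
        omega
      calc (hfx.toFinset.card : ℕ∞) ≤ ((n - 1 : ℕ) : ℕ∞) := by exact_mod_cast hlt
        _ = (n : ℕ∞) - 1 := by rw [ENat.coe_sub, Nat.cast_one]


/-! ### Hausdorff distance helpers -/

lemma hED_ne_top {x y : Set X} (hx : x.Nonempty) (hy : y.Nonempty)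
    (hfx : x.Finite) (hfy : y.Finite) : EMetric.hausdorffEdist x y ≠ ⊤ :=
  Metric.hausdorffEdist_ne_top_of_nonempty_of_bounded hx hy hfx.isBounded hfy.isBounded

lemma exists_close {x y : Set X} (hx : x.Nonempty) (hy : y.Nonempty)
    (hfx : x.Finite) (hfy : y.Finite) {p : X} (hp : p ∈ x) :
    ∃ q ∈ y, dist p q ≤ Metric.hausdorffDist x y := by
  obtain ⟨q, hq, he⟩ := hfy.isCompact.exists_infDist_eq_dist hy p
  refine ⟨q, hq, ?_⟩
  rw [← he]
  exact Metric.infDist_le_hausdorffDist_of_mem hp (hED_ne_top hx hy hfx hfy)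

lemma hd_le_diam {x y : Set X} (hx : x.Nonempty) (hy : y.Nonempty)
    (hfx : x.Finite) (hfy : y.Finite) :
    Metric.hausdorffDist x y ≤ Metric.diam (x ∪ y) := by
  have hb : Bornology.IsBounded (x ∪ y) := (hfx.union hfy).isBounded
  refine Metric.hausdorffDist_le_of_mem_dist Metric.diam_nonneg ?_ ?_
  · intro p hp
    obtain ⟨q, hq⟩ := hy
    exact ⟨q, hq, Metric.dist_le_diam_of_mem hb (Or.inl hp) (Or.inr hq)⟩
  · intro q hq
    obtain ⟨p, hp⟩ := hx
    exact ⟨p, hp, Metric.dist_le_diam_of_mem hb (Or.inr hq) (Or.inl hp)⟩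

/-- anything in the retracted set is within `R` of `z` as soon as all of `x` is -/
lemma rmap_ball {n : ℕ} (hn : 2 ≤ n) {x : Set X} (hfx : x.Finite)
    {z : X} {R : ℝ} (h : ∀ q ∈ x, dist q z ≤ R) :
    ∀ u ∈ rmap n x, dist u z ≤ R := by
  intro u hu
  rw [rmap_of_finite n hfx] at hu
  rw [Fmap] at hu
  by_cases hc : hfx.toFinset.card = n
  · rw [if_pos hc] at hu
    rcases Finset.mem_image.1 (by exact_mod_cast hu) with ⟨p, hp, rfl⟩
    have hg : 0 < gap hfx.toFinset := gap_pos (by omega)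
    exact psi_dist_le hg hp fun q hq => h q (hfx.mem_toFinset.1 hq)
  · rw [if_neg hc] at hu
    exact h u (hfx.mem_toFinset.1 (by exact_mod_cast hu))

lemma rmap_nonempty' {n : ℕ} {x : Set X} (hx : x.Nonempty) (hfx : x.Finite) :
    (rmap n x).Nonempty := by
  rw [rmap_of_finite n hfx]
  exact Finset.coe_nonempty.2 (Fmap_nonempty (by rwa [Set.Finite.toFinset_nonempty]))

lemma rmap_finite {n : ℕ} {x : Set X} (hfx : x.Finite) : (rmap n x).Finite := by
  rw [rmap_of_finite n hfx]
  exact (Fmap n hfx.toFinset).finite_toSet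

/-- the trivial diameter bound -/
lemma E_le_D {n : ℕ} (hn : 2 ≤ n) {x y : Set X} (hx : x.Nonempty) (hy : y.Nonempty)
    (hfx : x.Finite) (hfy : y.Finite) :
    Metric.hausdorffDist (rmap n x) (rmap n y) ≤ Metric.diam (x ∪ y) := by
  have hb : Bornology.IsBounded (x ∪ y) := (hfx.union hfy).isBounded
  have hkey : ∀ u ∈ rmap n x, ∀ v ∈ rmap n y, dist u v ≤ Metric.diam (x ∪ y) := by
    intro u hu v hv
    have hyv : ∀ q ∈ x, dist q v ≤ Metric.diam (x ∪ y) := by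
      intro q hq
      rw [dist_comm]
      refine rmap_ball hn hfy (fun p hp => ?_) v hv
      exact Metric.dist_le_diam_of_mem hb (Or.inr hp) (Or.inl hq)
    exact rmap_ball hn hfx hyv u hu
  refine Metric.hausdorffDist_le_of_mem_dist Metric.diam_nonneg ?_ ?_
  · intro u hu
    obtain ⟨v, hv⟩ := rmap_nonempty' hy hfy (n := n)
    exact ⟨v, hv, hkey u hu v hv⟩
  · intro v hv
    obtain ⟨u, hu⟩ := rmap_nonempty' hx hfx (n := n)
    exact ⟨u, hu, by rw [dist_comm]; exact hkey u hu v hv⟩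

/-- movement bound: `d_H(r x, x) ≤ (n-1)² gap` when `x` has exactly `n` points -/
lemma rmap_move {n : ℕ} (hn : 2 ≤ n) {x : Set X} (hfx : x.Finite)
    (hc : hfx.toFinset.card = n) :
    Metric.hausdorffDist (rmap n x) x ≤ ((n : ℝ) - 1) ^ 2 * gap hfx.toFinset := by
  have hcard : 1 < hfx.toFinset.card := by omega
  have hg : 0 < gap hfx.toFinset := gap_pos hcard
  have hR : 0 ≤ ((n : ℝ) - 1) ^ 2 * gap hfx.toFinset := by positivity
  rw [rmap_of_finite n hfx, Fmap_of_card hc]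
  refine Metric.hausdorffDist_le_of_mem_dist hR ?_ ?_
  · intro u hu
    rcases Finset.mem_image.1 (by exact_mod_cast hu) with ⟨p, hp, rfl⟩
    refine ⟨p, hfx.mem_toFinset.1 hp, ?_⟩
    have := psi_move hcard hp
    rwa [hc] at this
  · intro p hp
    have hp' : p ∈ hfx.toFinset := hfx.mem_toFinset.2 hp
    refine ⟨psi hfx.toFinset p, ?_, ?_⟩
    · exact_mod_cast Finset.mem_image_of_mem _ hp'
    · rw [dist_comm]
      have := psi_move hcard hp'
      rwa [hc] at this


/-! ### Stability under matchings -/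

lemma tau_stab {s s' : Finset X} {σ : X → X} {ε : ℝ}
    (hinj : Set.InjOn σ ↑s) (himg : s.image σ = s')
    (hcl : ∀ p ∈ s, dist p (σ p) ≤ ε) (hε : 0 ≤ ε)
    {p q : X} (hp : p ∈ s) (hq : q ∈ s) :
    tau s' (σ p) (σ q) ≤ tau s p q + 2 * ε := by
  have htau0 : 0 ≤ tau s p q := tau_nonneg hp hq
  obtain ⟨hp', hq', hreach⟩ := (tau_reach hp hq).1
  have hmem : ∀ a : {z // z ∈ s}, σ (a : X) ∈ s' := by
    intro a
    rw [← himg]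
    exact Finset.mem_image_of_mem σ a.2
  let f : {z // z ∈ s} → {z // z ∈ s'} := fun a => ⟨σ (a : X), hmem a⟩
  have hadj : ∀ {a b : {z // z ∈ s}}, (G s (tau s p q)).Adj a b →
      (G s' (tau s p q + 2 * ε)).Adj (f a) (f b) := by
    intro a b hab
    constructor
    · intro hfe
      apply hab.1
      have : σ (a : X) = σ (b : X) := congrArg Subtype.val hfe
      exact Subtype.ext (hinj (Finset.mem_coe.2 a.2) (Finset.mem_coe.2 b.2) this)
    · calc dist (σ (a : X)) (σ (b : X))
          ≤ dist (σ (a : X)) (a : X) + dist (a : X) (b : X) + dist (b : X) (σ (b : X)) :=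
            dist_triangle4 _ _ _ _
        _ ≤ ε + tau s p q + ε := by
            refine add_le_add (add_le_add ?_ hab.2) (hcl _ b.2)
            rw [dist_comm]; exact hcl _ a.2
        _ = tau s p q + 2 * ε := by ring
  have hhom : (G s' (tau s p q + 2 * ε)).Reachable (f ⟨p, hp'⟩) (f ⟨q, hq'⟩) := by
    obtain ⟨w⟩ := hreach
    refine SimpleGraph.Walk.reachable ?_
    exact w.map ⟨f, fun h => hadj h⟩
  exact tau_le_of_reach (by linarith) ⟨hmem ⟨p, hp'⟩, hmem ⟨q, hq'⟩, hhom⟩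

lemma gap_stab {s s' : Finset X} {σ : X → X} {ε : ℝ} (hcard : 1 < s.card)
    (hinj : Set.InjOn σ ↑s) (himg : s.image σ = s')
    (hcl : ∀ p ∈ s, dist p (σ p) ≤ ε) :
    gap s' ≤ gap s + 2 * ε := by
  obtain ⟨p₀, hp₀, q₀, hq₀, hne, hdist⟩ := gap_attained hcard
  have h1 : σ p₀ ∈ s' := by rw [← himg]; exact Finset.mem_image_of_mem σ hp₀
  have h2 : σ q₀ ∈ s' := by rw [← himg]; exact Finset.mem_image_of_mem σ hq₀
  have h3 : σ p₀ ≠ σ q₀ := fun h => hne (hinj (Finset.mem_coe.2 hp₀) (Finset.mem_coe.2 hq₀) h)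
  calc gap s' ≤ dist (σ p₀) (σ q₀) := gap_le_dist h1 h2 h3
    _ ≤ dist (σ p₀) p₀ + dist p₀ q₀ + dist q₀ (σ q₀) := dist_triangle4 _ _ _ _
    _ ≤ ε + gap s + ε := by
        refine add_le_add (add_le_add ?_ (le_of_eq hdist)) (hcl _ hq₀)
        rw [dist_comm]; exact hcl _ hp₀
    _ = gap s + 2 * ε := by ring

/-- inverse of a matching -/
lemma match_inv {s s' : Finset X} {σ : X → X} {ε : ℝ} (hs : s.Nonempty)
    (hinj : Set.InjOn σ ↑s) (himg : s.image σ = s')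
    (hcl : ∀ p ∈ s, dist p (σ p) ≤ ε) :
    ∃ σ' : X → X, Set.InjOn σ' ↑s' ∧ s'.image σ' = s ∧
      (∀ q ∈ s', dist q (σ' q) ≤ ε) ∧ (∀ p ∈ s, σ' (σ p) = p) := by
  haveI : Nonempty X := ⟨hs.choose⟩
  set σ' := Function.invFunOn σ ↑s with hσ'
  have hsur : ∀ q ∈ s', ∃ a ∈ (↑s : Set X), σ a = q := by
    intro q hq
    rw [← himg] at hq
    rcases Finset.mem_image.1 hq with ⟨a, ha, rfl⟩
    exact ⟨a, Finset.mem_coe.2 ha, rfl⟩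
  have hmem : ∀ q ∈ s', σ' q ∈ s := fun q hq =>
    Finset.mem_coe.1 (Function.invFunOn_mem (hsur q hq))
  have heq : ∀ q ∈ s', σ (σ' q) = q := fun q hq => Function.invFunOn_eq (hsur q hq)
  have hli : ∀ p ∈ s, σ' (σ p) = p := fun p hp =>
    hinj.leftInvOn_invFunOn (Finset.mem_coe.2 hp)
  have hinj' : Set.InjOn σ' ↑s' := by
    intro q₁ h₁ q₂ h₂ h
    rw [← heq q₁ (Finset.mem_coe.1 h₁), ← heq q₂ (Finset.mem_coe.1 h₂), h]
  have hcard : s'.card = s.card := by rw [← himg, Finset.card_image_of_injOn hinj]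
  have himg' : s'.image σ' = s := by
    refine Finset.eq_of_subset_of_card_le ?_ ?_
    · intro a ha
      rcases Finset.mem_image.1 ha with ⟨q, hq, rfl⟩
      exact hmem q hq
    · rw [Finset.card_image_of_injOn hinj', hcard]
  refine ⟨σ', hinj', himg', ?_, hli⟩
  intro q hq
  have h1 := hcl (σ' q) (hmem q hq)
  rw [heq q hq] at h1
  rwa [dist_comm] at h1

/-! ### scalar estimates -/

lemma exp_sub_exp_le {a b : ℝ} (hab : a ≤ b) :
    Real.exp (-a) - Real.exp (-b) ≤ (b - a) * Real.exp (-a) := by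
  have h1 : 1 - Real.exp (-(b - a)) ≤ b - a := by
    have := Real.add_one_le_exp (-(b - a))
    linarith
  have h2 : Real.exp (-b) = Real.exp (-a) * Real.exp (-(b - a)) := by
    rw [← Real.exp_add]; ring_nf
  nlinarith [Real.exp_pos (-a), Real.exp_pos (-(b-a))]

lemma abs_exp_sub_exp {a b m : ℝ} (hm1 : m ≤ a) (hm2 : m ≤ b) :
    |Real.exp (-a) - Real.exp (-b)| ≤ |a - b| * Real.exp (-m) := by
  rcases le_total a b with h | h
  · rw [abs_of_nonneg (by
      have := Real.exp_le_exp.2 (neg_le_neg h)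
      linarith)]
    calc Real.exp (-a) - Real.exp (-b) ≤ (b - a) * Real.exp (-a) := exp_sub_exp_le h
      _ ≤ |a - b| * Real.exp (-m) := by
          refine mul_le_mul ?_ (Real.exp_le_exp.2 (by linarith)) (Real.exp_pos _).le
            (abs_nonneg _)
          rw [abs_sub_comm, abs_of_nonneg (by linarith)]
  · rw [abs_sub_comm, abs_of_nonneg (by
      have := Real.exp_le_exp.2 (neg_le_neg h)
      linarith)]
    calc Real.exp (-b) - Real.exp (-a) ≤ (a - b) * Real.exp (-b) := exp_sub_exp_le h
      _ ≤ |a - b| * Real.exp (-m) := by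
          refine mul_le_mul ?_ (Real.exp_le_exp.2 (by linarith)) (Real.exp_pos _).le
            (abs_nonneg _)
          rw [abs_of_nonneg (by linarith : (0:ℝ) ≤ a - b)]

lemma exp_sq_bound (v : ℝ) (hv : 0 ≤ v) : (1 + v/3)^2 ≤ Real.exp (2*v/3) := by
  have h1 : 1 + v/3 ≤ Real.exp (v/3) := by
    have := Real.add_one_le_exp (v/3)
    linarith
  have h2 : Real.exp (2*v/3) = Real.exp (v/3) * Real.exp (v/3) := by
    rw [← Real.exp_add]; ring_nf
  nlinarith [Real.exp_pos (v/3)]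

lemma exp_twothirds_le_three : Real.exp (2/3 : ℝ) ≤ 3 := by
  have h1 : Real.exp (2/3 : ℝ) ≤ Real.exp 1 := Real.exp_le_exp.2 (by norm_num)
  have := Real.exp_one_lt_d9
  linarith


lemma mul_exp_neg_le {A B c : ℝ} (h : A ≤ B * Real.exp c) : A * Real.exp (-c) ≤ B := by
  have h1 := mul_le_mul_of_nonneg_right h (Real.exp_pos (-c)).le
  rwa [mul_assoc, ← Real.exp_add, add_neg_cancel, Real.exp_zero, mul_one] at h1

lemma aux48 {v : ℝ} (hv : 0 ≤ v) : (12*v + 24) * Real.exp (-(2*v/3)) ≤ 48 := by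
  refine mul_exp_neg_le ?_
  nlinarith [Real.add_one_le_exp (2*v/3)]

lemma aux216 {v : ℝ} (hv : 0 ≤ v) : (1 + v) * (12*v + 24) * Real.exp (-(2*v/3)) ≤ 216 := by
  refine mul_exp_neg_le ?_
  nlinarith [exp_sq_bound v hv]

/-- the key per-point weight comparison -/
lemma perq {g g' t t' ε : ℝ} (hg : 0 < g) (hε : 0 ≤ ε) (h4 : 4*ε ≤ g)
    (hgg' : |g' - g| ≤ 2*ε) (htt' : |t' - t| ≤ 2*ε)
    (hut : g ≤ max t g) (hut' : g' ≤ max t' g') :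
    |Real.exp (-(max t g - g)/g) - Real.exp (-(max t' g' - g')/g')| ≤ 48*ε/g ∧
    (max t g) * |Real.exp (-(max t g - g)/g) - Real.exp (-(max t' g' - g')/g')| ≤ 216*ε ∧
    (max t g) * Real.exp (-(max t' g' - g')/g') ≤ 3*g := by
  set u := max t g - g with hu_def
  set u' := max t' g' - g' with hu'_def
  have hu : 0 ≤ u := by simp only [hu_def]; linarith
  have hu' : 0 ≤ u' := by simp only [hu'_def]; linarith
  have hg'lb : g/2 ≤ g' := by
    have := abs_le.1 hgg'
    linarith [this.1]
  have hg'ub : g' ≤ 3*g/2 := by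
    have := abs_le.1 hgg'
    linarith [this.2]
  have hg' : 0 < g' := lt_of_lt_of_le (by linarith) hg'lb
  have hmax : |max t g - max t' g'| ≤ 2*ε := by
    refine (abs_max_sub_max_le_max t g t' g').trans ?_
    rw [abs_sub_comm t t']
    exact max_le htt' (by rwa [abs_sub_comm])
  have huu' : |u - u'| ≤ 4*ε := by
    have h1 : u - u' = (max t g - max t' g') - (g - g') := by
      rw [hu_def, hu'_def]; ring
    rw [h1]
    refine (abs_sub _ _).trans ?_
    rw [abs_sub_comm g g']
    linarith
  set v := u / g with hv_def
  have hv : 0 ≤ v := div_nonneg hu hg.le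
  -- step 1 : |u/g - u'/g'| ≤ (ε/g) * (4v + 8)
  have key1 : |u/g - u'/g'| ≤ ε/g * (4*v + 8) := by
    have e1 : u/g - u'/g' = u * (g' - g) / (g * g') + (u - u')/g' := by
      field_simp
      ring
    rw [e1]
    refine (abs_add_le _ _).trans ?_
    have b1 : |u * (g' - g) / (g * g')| ≤ 2*ε*u/(g^2/2) := by
      rw [abs_div, abs_mul, abs_of_nonneg hu, abs_of_pos (mul_pos hg hg')]
      refine div_le_div₀ (by positivity) ?_ (by positivity) ?_
      · calc u * |g' - g| ≤ u * (2*ε) := mul_le_mul_of_nonneg_left hgg' hu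
          _ = 2*ε*u := by ring
      · nlinarith
    have b2 : |(u - u')/g'| ≤ 4*ε/(g/2) := by
      rw [abs_div, abs_of_pos hg']
      exact div_le_div₀ (by positivity) huu' (by positivity) hg'lb
    have b1' : 2*ε*u/(g^2/2) = 4*v*(ε/g) := by
      rw [hv_def]; field_simp; ring
    have b2' : 4*ε/(g/2) = 8*(ε/g) := by field_simp; ring
    calc |u * (g' - g) / (g * g')| + |(u - u')/g'| ≤ 2*ε*u/(g^2/2) + 4*ε/(g/2) :=
          add_le_add b1 b2
      _ = ε/g * (4*v + 8) := by rw [b1', b2']; ring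
  -- step 2 : common lower bound for the two exponents
  have key2 : 2*v/3 - 2/3 ≤ u'/g' := by
    rcases le_or_gt (2*u - 2*g) 0 with hc | hc
    · have hvle : v ≤ 1 := by
        rw [hv_def, div_le_one hg]; linarith
      have : (0:ℝ) ≤ u'/g' := div_nonneg hu' hg'.le
      linarith
    · have hug : g < u := by linarith
      have hu'lb : u - 4*ε ≤ u' := by
        have := abs_le.1 huu'
        linarith [this.1]
      have h2 : (2*u - 2*g)/(3*g) ≤ u'/g' := by
        rw [div_le_div_iff₀ (by positivity) hg']
        have h3 : (2*u - 2*g) * g' ≤ (2*u - 2*g) * (3*g/2) :=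
          mul_le_mul_of_nonneg_left hg'ub (by linarith)
        have h4 : (u - 4*ε) * (3*g) ≤ u' * (3*g) :=
          mul_le_mul_of_nonneg_right hu'lb (by positivity)
        nlinarith
      refine le_trans (le_of_eq ?_) h2
      rw [hv_def]
      field_simp
  have key2' : 2*v/3 - 2/3 ≤ u/g := by
    rw [← hv_def]
    linarith
  -- step 3 : the exp difference
  have step3 : |Real.exp (-(u/g)) - Real.exp (-(u'/g'))| ≤
      ε/g * (12*v + 24) * Real.exp (-(2*v/3)) := by
    have h1 := abs_exp_sub_exp key2' key2
    have h2 : Real.exp (-(2*v/3 - 2/3)) = Real.exp (2/3) * Real.exp (-(2*v/3)) := by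
      rw [← Real.exp_add]; ring_nf
    have h3 : Real.exp (-(2*v/3 - 2/3)) ≤ 3 * Real.exp (-(2*v/3)) := by
      rw [h2]
      exact mul_le_mul_of_nonneg_right exp_twothirds_le_three (Real.exp_pos _).le
    calc |Real.exp (-(u/g)) - Real.exp (-(u'/g'))|
        ≤ |u/g - u'/g'| * Real.exp (-(2*v/3 - 2/3)) := h1
      _ ≤ (ε/g * (4*v + 8)) * (3 * Real.exp (-(2*v/3))) := by
          refine mul_le_mul key1 h3 (Real.exp_pos _).le ?_
          positivity
      _ = ε/g * (12*v + 24) * Real.exp (-(2*v/3)) := by ring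
  have hdivg : -u/g = -(u/g) := by ring
  have hdivg' : -u'/g' = -(u'/g') := by ring
  rw [hdivg, hdivg']
  have hεg : 0 ≤ ε/g := by positivity
  have hgu : max t g = g + u := by simp only [hu_def]; ring
  have hmgu : max t g = g * (1 + v) := by
    rw [hgu, hv_def]
    field_simp
  have hmax_nonneg : 0 ≤ max t g := by linarith
  refine ⟨?_, ?_, ?_⟩
  · -- plain bound
    refine step3.trans ?_
    have h1 : (12*v + 24) * Real.exp (-(2*v/3)) ≤ 48 := aux48 hv
    calc ε/g * (12*v + 24) * Real.exp (-(2*v/3))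
        = ε/g * ((12*v + 24) * Real.exp (-(2*v/3))) := by ring
      _ ≤ ε/g * 48 := mul_le_mul_of_nonneg_left h1 hεg
      _ = 48*ε/g := by ring
  · -- weighted bound
    have h1 : (1 + v) * (12*v + 24) * Real.exp (-(2*v/3)) ≤ 216 := aux216 hv
    calc max t g * |Real.exp (-(u/g)) - Real.exp (-(u'/g'))|
        ≤ max t g * (ε/g * (12*v + 24) * Real.exp (-(2*v/3))) :=
          mul_le_mul_of_nonneg_left step3 hmax_nonneg
      _ = ε * ((1 + v) * (12*v + 24) * Real.exp (-(2*v/3))) := by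
          rw [hmgu]; field_simp
      _ ≤ ε * 216 := mul_le_mul_of_nonneg_left h1 hε
      _ = 216*ε := by ring
  · -- mass bound
    have hb1 : max t g ≤ g' + u' + 6*ε := by
      have h1 : g ≤ g' + 2*ε := by
        have := abs_le.1 hgg'
        linarith [this.1]
      have h2 : u ≤ u' + 4*ε := by
        have := abs_le.1 huu'
        linarith [this.2]
      have h3 : max t g = g + u := by rw [hu_def]; ring
      linarith
    have hb2 : Real.exp (-(u'/g')) * (g' + u') ≤ g' := by
      have := L1 hg' hu'
      rwa [hdivg'] at this
    have hb3 : Real.exp (-(u'/g')) ≤ 1 := by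
      rw [Real.exp_le_one_iff]
      have := div_nonneg hu' hg'.le
      linarith
    calc max t g * Real.exp (-(u'/g')) ≤ (g' + u' + 6*ε) * Real.exp (-(u'/g')) :=
          mul_le_mul_of_nonneg_right hb1 (Real.exp_pos _).le
      _ = Real.exp (-(u'/g')) * (g' + u') + 6*ε * Real.exp (-(u'/g')) := by ring
      _ ≤ g' + 6*ε * 1 := by
          refine add_le_add hb2 (mul_le_mul_of_nonneg_left hb3 (by linarith))
      _ ≤ 3*g := by linarith


/-- main comparison estimate along a bijective matching, when the gap is large -/
lemma E2 {n : ℕ} (hn : 2 ≤ n) {s s' : Finset X} {σ : X → X} {ε : ℝ}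
    (hcs : s.card = n) (hcs' : s'.card = n)
    (hinj : Set.InjOn σ ↑s) (himg : s.image σ = s')
    (hcl : ∀ p ∈ s, dist p (σ p) ≤ ε) (hε : 0 ≤ ε)
    (hδ : 4*ε ≤ gap s) {p : X} (hp : p ∈ s) :
    dist (psi s p) (psi s' (σ p)) ≤ (1 + 432*(n:ℝ)^2 + 288*(n:ℝ)^3) * ε := by
  have hcard1 : 1 < s.card := by omega
  have hcard1' : 1 < s'.card := by omega
  have hg : 0 < gap s := gap_pos hcard1
  have hg' : 0 < gap s' := gap_pos hcard1'
  have hσmem : ∀ q ∈ s, σ q ∈ s' := by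
    intro q hq
    rw [← himg]
    exact Finset.mem_image_of_mem σ hq
  have hσp : σ p ∈ s' := hσmem p hp
  obtain ⟨σ', hinj', himg', hcl', hli⟩ := match_inv ⟨p, hp⟩ hinj himg hcl
  -- gap stability
  have hgapabs : |gap s' - gap s| ≤ 2*ε := by
    rw [abs_le]
    constructor
    · have := gap_stab hcard1' hinj' himg' hcl'
      linarith
    · have := gap_stab hcard1 hinj himg hcl
      linarith
  -- tau stability
  have htau : ∀ q ∈ s, |tau s' (σ p) (σ q) - tau s p q| ≤ 2*ε := by
    intro q hq
    rw [abs_le]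
    constructor
    · have h1 := tau_stab hinj' himg' hcl' (by linarith) hσp (hσmem q hq)
      rw [hli p hp, hli q hq] at h1
      linarith
    · have h2 := tau_stab hinj himg hcl (by linarith) hp hq
      linarith
  -- per-point weight estimates
  have hperq : ∀ q ∈ s,
      |wt s p q - wt s' (σ p) (σ q)| ≤ 48*ε/gap s ∧
      (max (tau s p q) (gap s)) * |wt s p q - wt s' (σ p) (σ q)| ≤ 216*ε ∧
      (max (tau s p q) (gap s)) * wt s' (σ p) (σ q) ≤ 3*gap s := by
    intro q hq
    have h1 := perq (t := tau s p q) (t' := tau s' (σ p) (σ q)) hg hε hδ hgapabs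
      (htau q hq) (le_max_right _ _) (le_max_right _ _)
    simpa [wt] using h1
  -- distance of matched points under `psi`
  set A := ∑ q ∈ s, wt s p q with hA_def
  set B := ∑ q ∈ s, wt s' (σ p) (σ q) with hB_def
  have hA1 : 1 ≤ A := Wsum_ge_one hg hp
  have hinj'' : ∀ x ∈ s, ∀ y ∈ s, σ x = σ y → x = y := fun x hx y hy h =>
    hinj (Finset.mem_coe.2 hx) (Finset.mem_coe.2 hy) h
  have hBrw : ∑ q' ∈ s', wt s' (σ p) q' = B := by
    have h0 : ∑ q' ∈ Finset.image σ s, wt s' (σ p) q' = ∑ q ∈ s, wt s' (σ p) (σ q) :=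
      Finset.sum_image hinj''
    rw [himg] at h0
    rw [h0, hB_def]
  have hB1 : 1 ≤ B := by
    rw [← hBrw]
    exact Wsum_ge_one hg' hσp
  have hA0 : (0:ℝ) < A := by linarith
  have hB0 : (0:ℝ) < B := by linarith
  have hpsi' : psi s' (σ p) = B⁻¹ • ∑ q ∈ s, wt s' (σ p) (σ q) • σ q := by
    have h0 : ∑ q' ∈ Finset.image σ s, wt s' (σ p) q' • q'
        = ∑ q ∈ s, wt s' (σ p) (σ q) • σ q := Finset.sum_image hinj''
    rw [himg] at h0
    rw [psi, hBrw, h0]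
  set Z : X := A⁻¹ • ∑ q ∈ s, wt s p q • σ q with hZ_def
  -- first leg
  have hd1 : dist (psi s p) Z ≤ ε := by
    have he : psi s p - Z = A⁻¹ • ∑ q ∈ s, wt s p q • (q - σ q) := by
      rw [psi, hZ_def, ← smul_sub, ← Finset.sum_sub_distrib]
      congr 1
      refine Finset.sum_congr rfl fun q hq => ?_
      rw [smul_sub]
    rw [dist_eq_norm, he, norm_smul, Real.norm_eq_abs, abs_of_pos (inv_pos.2 hA0)]
    have h1 : ‖∑ q ∈ s, wt s p q • (q - σ q)‖ ≤ ∑ q ∈ s, wt s p q * ε := by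
      refine (norm_sum_le _ _).trans (Finset.sum_le_sum fun q hq => ?_)
      rw [norm_smul, Real.norm_eq_abs, abs_of_pos (wt_pos _ _ _)]
      refine mul_le_mul_of_nonneg_left ?_ (wt_pos _ _ _).le
      rw [← dist_eq_norm]
      exact hcl q hq
    calc A⁻¹ * ‖∑ q ∈ s, wt s p q • (q - σ q)‖ ≤ A⁻¹ * (∑ q ∈ s, wt s p q * ε) :=
          mul_le_mul_of_nonneg_left h1 (inv_pos.2 hA0).le
      _ = A⁻¹ * (A * ε) := by rw [← Finset.sum_mul]
      _ = ε := by field_simp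
  -- second leg
  set S := ∑ r ∈ s, |wt s p r - wt s' (σ p) (σ r)| with hS_def
  have hSle : S ≤ (n:ℝ) * (48*ε/gap s) := by
    rw [hS_def]
    calc ∑ r ∈ s, |wt s p r - wt s' (σ p) (σ r)| ≤ ∑ r ∈ s, 48*ε/gap s :=
          Finset.sum_le_sum fun r hr => (hperq r hr).1
      _ = (n:ℝ) * (48*ε/gap s) := by
          rw [Finset.sum_const, nsmul_eq_mul, hcs]
  have hS0 : 0 ≤ S := Finset.sum_nonneg fun r _ => abs_nonneg _
  have hBA : |B - A| ≤ S := by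
    rw [hA_def, hB_def, hS_def, ← Finset.sum_sub_distrib]
    refine (Finset.abs_sum_le_sum_abs _ _).trans (le_of_eq ?_)
    refine Finset.sum_congr rfl fun r hr => ?_
    rw [abs_sub_comm]
  -- coefficient bound
  have hcq : ∀ q ∈ s, |wt s p q / A - wt s' (σ p) (σ q) / B| ≤
      |wt s p q - wt s' (σ p) (σ q)| + wt s' (σ p) (σ q) * S := by
    intro q hq
    have he : wt s p q / A - wt s' (σ p) (σ q) / B
        = (wt s p q - wt s' (σ p) (σ q))/A + wt s' (σ p) (σ q) * (B - A)/(A*B) := by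
      field_simp
      ring_nf
    rw [he]
    refine (abs_add_le _ _).trans ?_
    have h1 : |(wt s p q - wt s' (σ p) (σ q))/A| ≤ |wt s p q - wt s' (σ p) (σ q)| := by
      rw [abs_div, abs_of_pos hA0]
      exact div_le_self (abs_nonneg _) hA1
    have h2 : |wt s' (σ p) (σ q) * (B - A)/(A*B)| ≤ wt s' (σ p) (σ q) * S := by
      rw [abs_div, abs_mul, abs_of_pos (wt_pos _ _ _), abs_of_pos (mul_pos hA0 hB0)]
      have hAB1 : 1 ≤ A * B := one_le_mul_of_one_le_of_one_le hA1 hB1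
      have h0 : 0 ≤ wt s' (σ p) (σ q) * |B - A| := mul_nonneg (wt_pos _ _ _).le (abs_nonneg _)
      calc wt s' (σ p) (σ q) * |B - A| / (A*B) ≤ wt s' (σ p) (σ q) * |B - A| :=
            div_le_self h0 hAB1
        _ ≤ wt s' (σ p) (σ q) * S := mul_le_mul_of_nonneg_left hBA (wt_pos _ _ _).le
    exact add_le_add h1 h2
  -- distance of image points
  have hdq : ∀ q ∈ s, ‖σ q - σ p‖ ≤ 2*(n:ℝ) * (max (tau s p q) (gap s)) := by
    intro q hq
    have h1 : dist (σ q) (σ p) ≤ ((n:ℝ) - 1) * tau s' (σ p) (σ q) := by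
      rw [dist_comm]
      have := dist_le_card_tau hσp (hσmem q hq)
      rwa [hcs'] at this
    have h2 : tau s' (σ p) (σ q) ≤ max (tau s p q) (gap s) + 2*ε := by
      have := (abs_le.1 (htau q hq)).2
      have h3 : tau s p q ≤ max (tau s p q) (gap s) := le_max_left _ _
      linarith
    have hmx : gap s ≤ max (tau s p q) (gap s) := le_max_right _ _
    have hn1 : (1:ℝ) ≤ (n:ℝ) := by exact_mod_cast (by omega : 1 ≤ n)
    have h4 : ((n:ℝ) - 1) * tau s' (σ p) (σ q) ≤
        ((n:ℝ) - 1) * (max (tau s p q) (gap s) + 2*ε) := by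
      refine mul_le_mul_of_nonneg_left h2 (by linarith)
    rw [← dist_eq_norm]
    have h5 : 2*ε ≤ max (tau s p q) (gap s) := by linarith
    nlinarith [tau_nonneg hp hq, hg.le]
  -- assembling the second leg
  have hd2 : dist Z (psi s' (σ p)) ≤ 432*(n:ℝ)^2*ε + 288*(n:ℝ)^3*ε := by
    have hZsub : Z - psi s' (σ p)
        = ∑ q ∈ s, (wt s p q / A - wt s' (σ p) (σ q) / B) • σ q := by
      rw [hpsi', hZ_def, Finset.smul_sum, Finset.smul_sum, ← Finset.sum_sub_distrib]
      refine Finset.sum_congr rfl fun q hq => ?_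
      rw [smul_smul, smul_smul, ← sub_smul]
      congr 1
      rw [div_eq_inv_mul, div_eq_inv_mul]
    have hzero : ∑ q ∈ s, (wt s p q / A - wt s' (σ p) (σ q) / B) = 0 := by
      rw [Finset.sum_sub_distrib, ← Finset.sum_div, ← Finset.sum_div, ← hA_def, ← hB_def,
        div_self hA0.ne', div_self hB0.ne', sub_self]
    have hanchor : Z - psi s' (σ p)
        = ∑ q ∈ s, (wt s p q / A - wt s' (σ p) (σ q) / B) • (σ q - σ p) := by
      rw [hZsub]
      have he : ∑ q ∈ s, (wt s p q / A - wt s' (σ p) (σ q) / B) • σ q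
          = ∑ q ∈ s, (wt s p q / A - wt s' (σ p) (σ q) / B) • (σ q - σ p)
            + (∑ q ∈ s, (wt s p q / A - wt s' (σ p) (σ q) / B)) • σ p := by
        rw [Finset.sum_smul, ← Finset.sum_add_distrib]
        refine Finset.sum_congr rfl fun q hq => ?_
        rw [smul_sub]
        abel
      rw [he, hzero, zero_smul, add_zero]
    rw [dist_eq_norm, hanchor]
    have hbound : ∀ q ∈ s, ‖(wt s p q / A - wt s' (σ p) (σ q) / B) • (σ q - σ p)‖ ≤
        2*(n:ℝ)*216*ε + 2*(n:ℝ)*S*(3*gap s) := by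
      intro q hq
      rw [norm_smul, Real.norm_eq_abs]
      have h1 := hcq q hq
      have h2 := hdq q hq
      have h3 := (hperq q hq).2.1
      have h4 := (hperq q hq).2.2
      have hmx0 : 0 ≤ max (tau s p q) (gap s) := le_trans hg.le (le_max_right _ _)
      have hn0 : (0:ℝ) ≤ (n:ℝ) := Nat.cast_nonneg n
      calc |wt s p q / A - wt s' (σ p) (σ q) / B| * ‖σ q - σ p‖
          ≤ (|wt s p q - wt s' (σ p) (σ q)| + wt s' (σ p) (σ q) * S)
            * (2*(n:ℝ) * (max (tau s p q) (gap s))) := by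
            refine mul_le_mul h1 h2 (norm_nonneg _) ?_
            exact add_nonneg (abs_nonneg _) (mul_nonneg (wt_pos _ _ _).le hS0)
        _ = 2*(n:ℝ)*((max (tau s p q) (gap s)) * |wt s p q - wt s' (σ p) (σ q)|)
            + 2*(n:ℝ)*S*((max (tau s p q) (gap s)) * wt s' (σ p) (σ q)) := by ring
        _ ≤ 2*(n:ℝ)*(216*ε) + 2*(n:ℝ)*S*(3*gap s) := by
            refine add_le_add (mul_le_mul_of_nonneg_left h3 (by positivity)) ?_
            refine mul_le_mul_of_nonneg_left h4 ?_
            exact mul_nonneg (by positivity) hS0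
        _ = 2*(n:ℝ)*216*ε + 2*(n:ℝ)*S*(3*gap s) := by ring
    calc ‖∑ q ∈ s, (wt s p q / A - wt s' (σ p) (σ q) / B) • (σ q - σ p)‖
        ≤ ∑ q ∈ s, (2*(n:ℝ)*216*ε + 2*(n:ℝ)*S*(3*gap s)) :=
          (norm_sum_le _ _).trans (Finset.sum_le_sum hbound)
      _ = (n:ℝ) * (2*(n:ℝ)*216*ε + 2*(n:ℝ)*S*(3*gap s)) := by
          rw [Finset.sum_const, nsmul_eq_mul, hcs]
      _ ≤ 432*(n:ℝ)^2*ε + 288*(n:ℝ)^3*ε := by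
          have h1 : (n:ℝ) * (2*(n:ℝ)*S*(3*gap s)) ≤ 288*(n:ℝ)^3*ε := by
            have h2 : S * gap s ≤ 48*(n:ℝ)*ε := by
              have := mul_le_mul_of_nonneg_right hSle hg.le
              calc S * gap s ≤ (n:ℝ) * (48*ε/gap s) * gap s := this
                _ = 48*(n:ℝ)*ε := by field_simp
            have hn0 : (0:ℝ) ≤ (n:ℝ) := Nat.cast_nonneg n
            calc (n:ℝ) * (2*(n:ℝ)*S*(3*gap s)) = 6*(n:ℝ)^2*(S * gap s) := by ring
              _ ≤ 6*(n:ℝ)^2*(48*(n:ℝ)*ε) := by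
                  refine mul_le_mul_of_nonneg_left h2 (by positivity)
              _ = 288*(n:ℝ)^3*ε := by ring
          nlinarith [Nat.cast_nonneg (α := ℝ) n]
  calc dist (psi s p) (psi s' (σ p)) ≤ dist (psi s p) Z + dist Z (psi s' (σ p)) :=
        dist_triangle _ _ _
    _ ≤ ε + (432*(n:ℝ)^2*ε + 288*(n:ℝ)^3*ε) := add_le_add hd1 hd2
    _ = (1 + 432*(n:ℝ)^2 + 288*(n:ℝ)^3) * ε := by ring


/-! ### the two-point case -/

lemma gap_pair {a b : X} (hne : a ≠ b) : gap ({a, b} : Finset X) = dist a b := by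
  have hcard : 1 < ({a, b} : Finset X).card := by
    rw [Finset.card_pair hne]; omega
  refine le_antisymm (gap_le_dist (by simp) (by simp) hne) ?_
  obtain ⟨p, hp, q, hq, hpq, hd⟩ := gap_attained hcard
  rw [← hd]
  simp only [Finset.mem_insert, Finset.mem_singleton] at hp hq
  rcases hp with rfl | rfl <;> rcases hq with rfl | rfl
  · exact absurd rfl hpq
  · exact le_refl _
  · rw [dist_comm]
  · exact absurd rfl hpq

lemma psi_pair {a b : X} (hne : a ≠ b) :
    psi ({a, b} : Finset X) a = (2:ℝ)⁻¹ • (a + b) := by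
  have hcard : 1 < ({a, b} : Finset X).card := by
    rw [Finset.card_pair hne]; omega
  have hg : 0 < gap ({a, b} : Finset X) := gap_pos hcard
  have ha : a ∈ ({a, b} : Finset X) := by simp
  have hb : b ∈ ({a, b} : Finset X) := by simp
  have hw1 : wt ({a, b} : Finset X) a a = 1 := wt_self hg ha
  have hw2 : wt ({a, b} : Finset X) a b = 1 := by
    have ht : tau ({a, b} : Finset X) a b ≤ gap ({a, b} : Finset X) := by
      rw [gap_pair hne]
      exact tau_le_dist ha hb
    rw [wt, max_eq_right ht]
    simp
  rw [psi, Finset.sum_pair hne, Finset.sum_pair hne, hw1, hw2]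
  norm_num

lemma psi_pair' {a b : X} (hne : a ≠ b) :
    psi ({a, b} : Finset X) b = (2:ℝ)⁻¹ • (a + b) := by
  have h1 : ({a, b} : Finset X) = ({b, a} : Finset X) := by
    ext z; simp [or_comm]
  rw [h1, psi_pair hne.symm]
  congr 1
  abel

/-- the two-point to two-point matched estimate -/
lemma E2_pair {s s' : Finset X} {σ : X → X} {ε : ℝ}
    (hcs : s.card = 2) (hcs' : s'.card = 2)
    (hinj : Set.InjOn σ ↑s) (himg : s.image σ = s')
    (hcl : ∀ p ∈ s, dist p (σ p) ≤ ε) {p : X} (hp : p ∈ s) :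
    dist (psi s p) (psi s' (σ p)) ≤ ε := by
  obtain ⟨a, b, hne, rfl⟩ := Finset.card_eq_two.1 hcs
  have ha : a ∈ ({a, b} : Finset X) := by simp
  have hb : b ∈ ({a, b} : Finset X) := by simp
  have hne' : σ a ≠ σ b := fun h => hne (hinj (by simp) (by simp) h)
  have himg2 : s' = ({σ a, σ b} : Finset X) := by
    rw [← himg]
    ext z
    simp [Finset.mem_image]
  have hda := hcl a ha
  have hdb := hcl b hb
  have hmid : ∀ r ∈ ({a, b} : Finset X),
      dist (psi ({a, b} : Finset X) r) (psi s' (σ r)) ≤ ε := by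
    intro r hr
    have h1 : psi ({a, b} : Finset X) r = (2:ℝ)⁻¹ • (a + b) := by
      rcases Finset.mem_insert.1 hr with rfl | hr'
      · exact psi_pair hne
      · rw [Finset.mem_singleton.1 hr']
        exact psi_pair' hne
    have h2 : psi s' (σ r) = (2:ℝ)⁻¹ • (σ a + σ b) := by
      rw [himg2]
      rcases Finset.mem_insert.1 hr with rfl | hr'
      · exact psi_pair hne'
      · rw [Finset.mem_singleton.1 hr']
        exact psi_pair' hne'
    rw [h1, h2, dist_eq_norm, ← smul_sub]
    have h3 : (a + b) - (σ a + σ b) = (a - σ a) + (b - σ b) := by abel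
    rw [norm_smul, h3, Real.norm_eq_abs]
    have h4 : ‖(a - σ a) + (b - σ b)‖ ≤ ε + ε := by
      refine (norm_add_le _ _).trans ?_
      rw [← dist_eq_norm, ← dist_eq_norm]
      exact add_le_add hda hdb
    rw [abs_of_pos (by norm_num : (0:ℝ) < (2:ℝ)⁻¹)]
    nlinarith [norm_nonneg ((a - σ a) + (b - σ b))]
  exact hmid p hp


/-! ### the Lipschitz-type driver -/

/-- the case constant -/
def Kc (n : ℕ) : ℝ := if n = 2 then 16 else 800*(n:ℝ)^3

lemma hd_of_match {n : ℕ} {x y : Set X} (hfx : x.Finite) (hfy : y.Finite)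
    (hcx : hfx.toFinset.card = n) (hcy : hfy.toFinset.card = n) {σ : X → X}
    (himg : hfx.toFinset.image σ = hfy.toFinset)
    {C : ℝ} (hC : 0 ≤ C)
    (hpt : ∀ p ∈ hfx.toFinset, dist (psi hfx.toFinset p) (psi hfy.toFinset (σ p)) ≤ C) :
    Metric.hausdorffDist (rmap n x) (rmap n y) ≤ C := by
  rw [rmap_of_finite n hfx, rmap_of_finite n hfy, Fmap_of_card hcx, Fmap_of_card hcy]
  refine Metric.hausdorffDist_le_of_mem_dist hC ?_ ?_
  · intro u hu
    rcases Finset.mem_image.1 (by exact_mod_cast hu) with ⟨p, hp, rfl⟩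
    refine ⟨psi hfy.toFinset (σ p), ?_, hpt p hp⟩
    have hσp : σ p ∈ hfy.toFinset := by
      rw [← himg]; exact Finset.mem_image_of_mem σ hp
    exact_mod_cast Finset.mem_image_of_mem _ hσp
  · intro v hv
    rcases Finset.mem_image.1 (by exact_mod_cast hv) with ⟨q', hq', rfl⟩
    rw [← himg] at hq'
    rcases Finset.mem_image.1 hq' with ⟨p, hp, rfl⟩
    refine ⟨psi hfx.toFinset p, ?_, ?_⟩
    · exact_mod_cast Finset.mem_image_of_mem _ hp
    · rw [dist_comm]; exact hpt p hp

lemma tri_bound {n : ℕ} (hn : 2 ≤ n) {x y : Set X} (hx : x.Nonempty) (hy : y.Nonempty)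
    (hfx : x.Finite) (hfy : y.Finite)
    (hcx : hfx.toFinset.card = n) (hcy : hfy.toFinset.card = n) :
    Metric.hausdorffDist (rmap n x) (rmap n y) ≤
      ((n:ℝ)-1)^2 * gap hfx.toFinset + Metric.hausdorffDist x y
        + ((n:ℝ)-1)^2 * gap hfy.toFinset := by
  have hfrx := rmap_finite (n := n) hfx
  have hfry := rmap_finite (n := n) hfy
  have hrx := rmap_nonempty' (n := n) hx hfx
  have hry := rmap_nonempty' (n := n) hy hfy
  have t1 : Metric.hausdorffDist (rmap n x) (rmap n y) ≤
      Metric.hausdorffDist (rmap n x) x + Metric.hausdorffDist x (rmap n y) :=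
    Metric.hausdorffDist_triangle (hED_ne_top hrx hx hfrx hfx)
  have t2 : Metric.hausdorffDist x (rmap n y) ≤
      Metric.hausdorffDist x y + Metric.hausdorffDist y (rmap n y) :=
    Metric.hausdorffDist_triangle (hED_ne_top hx hy hfx hfy)
  have m1 := rmap_move hn hfx hcx
  have m2 := rmap_move hn hfy hcy
  rw [Metric.hausdorffDist_comm] at m2
  linarith

lemma gap_le_of_collision {s : Finset X} {ν : X → X} {ε : ℝ}
    (hcl : ∀ p ∈ s, dist p (ν p) ≤ ε) {p₁ p₂ : X} (h1 : p₁ ∈ s) (h2 : p₂ ∈ s)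
    (hne : p₁ ≠ p₂) (he : ν p₁ = ν p₂) : gap s ≤ 2*ε := by
  calc gap s ≤ dist p₁ p₂ := gap_le_dist h1 h2 hne
    _ ≤ dist p₁ (ν p₁) + dist (ν p₂) p₂ := by
        rw [he]
        exact dist_triangle _ _ _
    _ ≤ ε + ε := add_le_add (hcl _ h1) (by rw [dist_comm]; exact hcl _ h2)
    _ = 2*ε := by ring

/-- nearest-point map -/
lemma nearest_map {x y : Set X} (hx : x.Nonempty) (hy : y.Nonempty)
    (hfx : x.Finite) (hfy : y.Finite) :
    ∃ ν : X → X, ∀ p ∈ x, ν p ∈ y ∧ dist p (ν p) ≤ Metric.hausdorffDist x y := by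
  classical
  refine ⟨fun p => if h : ∃ q ∈ y, dist p q ≤ Metric.hausdorffDist x y
    then h.choose else p, ?_⟩
  intro p hp
  have h := exists_close hx hy hfx hfy hp
  dsimp only
  rw [dif_pos h]
  exact ⟨h.choose_spec.1, h.choose_spec.2⟩

/-- the main Lipschitz-type estimate -/
lemma driver {n : ℕ} (hn : 2 ≤ n) {x y : Set X} (hx : x.Nonempty) (hy : y.Nonempty)
    (hfx : x.Finite) (hfy : y.Finite)
    (hcx : hfx.toFinset.card ≤ n) (hcy : hfy.toFinset.card ≤ n) :
    Metric.hausdorffDist (rmap n x) (rmap n y) ≤ Kc n * Metric.hausdorffDist x y := by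
  set ε := Metric.hausdorffDist x y with hε_def
  have hε : 0 ≤ ε := Metric.hausdorffDist_nonneg
  have hn1 : (1:ℝ) ≤ (n:ℝ) := by exact_mod_cast (by omega : 1 ≤ n)
  have hKc1 : (10*((n:ℝ)-1)^2 + 1) ≤ Kc n := by
    rw [Kc]
    split
    · next h => rw [h]; norm_num
    · next h =>
      have h3 : (3:ℝ) ≤ (n:ℝ) := by exact_mod_cast (by omega : 3 ≤ n)
      nlinarith
  have hKc0 : (1:ℝ) ≤ Kc n := by nlinarith
  -- symmetric wlog helper for the mixed case
  have mixed : ∀ {x' y' : Set X} (hx' : x'.Nonempty) (hy' : y'.Nonempty)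
      (hfx' : x'.Finite) (hfy' : y'.Finite),
      hfx'.toFinset.card = n → hfy'.toFinset.card < n →
      Metric.hausdorffDist (rmap n x') (rmap n y') ≤
        (2*((n:ℝ)-1)^2 + 1) * Metric.hausdorffDist x' y' := by
    intro x' y' hx' hy' hfx' hfy' hcx' hcy'
    set ε' := Metric.hausdorffDist x' y' with hε'_def
    have hε'0 : 0 ≤ ε' := Metric.hausdorffDist_nonneg
    obtain ⟨ν, hν⟩ := nearest_map hx' hy' hfx' hfy'
    have hmaps : ∀ p ∈ hfx'.toFinset, ν p ∈ hfy'.toFinset := by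
      intro p hp
      exact hfy'.mem_toFinset.2 (hν p (hfx'.mem_toFinset.1 hp)).1
    obtain ⟨p₁, h1, p₂, h2, hne, he⟩ :=
      Finset.exists_ne_map_eq_of_card_lt_of_maps_to (by omega) hmaps
    have hgap : gap hfx'.toFinset ≤ 2*ε' := by
      refine gap_le_of_collision (fun p hp => (hν p (hfx'.mem_toFinset.1 hp)).2) h1 h2 hne he
    have hry : rmap n y' = y' := by
      rw [rmap_of_finite n hfy', Fmap_of_ne (by omega), Set.Finite.coe_toFinset]
    have hfrx := rmap_finite (n := n) hfx'
    have hrx := rmap_nonempty' (n := n) hx' hfx'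
    have t1 : Metric.hausdorffDist (rmap n x') (rmap n y') ≤
        Metric.hausdorffDist (rmap n x') x' + Metric.hausdorffDist x' y' := by
      rw [hry]
      exact Metric.hausdorffDist_triangle (hED_ne_top hrx hx' hfrx hfx')
    have m1 := rmap_move hn hfx' hcx'
    have hmove : Metric.hausdorffDist (rmap n x') x' ≤ ((n:ℝ)-1)^2 * (2*ε') := by
      refine m1.trans (mul_le_mul_of_nonneg_left hgap (by positivity))
    nlinarith
  rcases eq_or_lt_of_le hcx with hcxe | hcxl
  · rcases eq_or_lt_of_le hcy with hcye | hcyl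
    · -- both have exactly n points
      obtain ⟨ν, hν⟩ := nearest_map hx hy hfx hfy
      have hcl : ∀ p ∈ hfx.toFinset, dist p (ν p) ≤ ε :=
        fun p hp => (hν p (hfx.mem_toFinset.1 hp)).2
      have hmaps : ∀ p ∈ hfx.toFinset, ν p ∈ hfy.toFinset :=
        fun p hp => hfy.mem_toFinset.2 (hν p (hfx.mem_toFinset.1 hp)).1
      obtain ⟨μ, hμ⟩ := nearest_map hy hx hfy hfx
      have hclμ : ∀ q ∈ hfy.toFinset, dist q (μ q) ≤ ε := by
        intro q hq
        rw [hε_def, Metric.hausdorffDist_comm]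
        exact (hμ q (hfy.mem_toFinset.1 hq)).2
      have hmapsμ : ∀ q ∈ hfy.toFinset, μ q ∈ hfx.toFinset :=
        fun q hq => hfx.mem_toFinset.2 (hμ q (hfy.mem_toFinset.1 hq)).1
      by_cases hinj : Set.InjOn ν ↑hfx.toFinset
      · -- bijective matching
        have himg : hfx.toFinset.image ν = hfy.toFinset := by
          refine Finset.eq_of_subset_of_card_le ?_ ?_
          · intro u hu
            rcases Finset.mem_image.1 hu with ⟨p, hp, rfl⟩
            exact hmaps p hp
          · rw [Finset.card_image_of_injOn hinj, hcxe, hcye]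
        by_cases hgap : 4*ε ≤ gap hfx.toFinset
        · -- main case
          by_cases hn2 : n = 2
          · subst hn2
            have hpt : ∀ p ∈ hfx.toFinset,
                dist (psi hfx.toFinset p) (psi hfy.toFinset (ν p)) ≤ ε :=
              fun p hp => E2_pair hcxe hcye hinj himg hcl hp
            refine (hd_of_match hfx hfy hcxe hcye himg hε hpt).trans ?_
            nlinarith
          · have hn3 : 3 ≤ n := by omega
            have hpt : ∀ p ∈ hfx.toFinset,
                dist (psi hfx.toFinset p) (psi hfy.toFinset (ν p)) ≤
                  (1 + 432*(n:ℝ)^2 + 288*(n:ℝ)^3) * ε :=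
              fun p hp => E2 hn hcxe hcye hinj himg hcl hε hgap hp
            have hC0 : (0:ℝ) ≤ (1 + 432*(n:ℝ)^2 + 288*(n:ℝ)^3) * ε := by positivity
            refine (hd_of_match hfx hfy hcxe hcye himg hC0 hpt).trans ?_
            have h3 : (3:ℝ) ≤ (n:ℝ) := by exact_mod_cast hn3
            have hKcn : Kc n = 800*(n:ℝ)^3 := if_neg hn2
            rw [hKcn]
            nlinarith
        · -- small gap
          push_neg at hgap
          have hgy : gap hfy.toFinset ≤ gap hfx.toFinset + 2*ε :=
            gap_stab (by omega) hinj himg hcl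
          refine (tri_bound hn hx hy hfx hfy hcxe hcye).trans ?_
          have hpow : (0:ℝ) ≤ ((n:ℝ)-1)^2 := by positivity
          nlinarith
      · -- ν collides : gap of x is small
        obtain ⟨p₁, h1, p₂, h2, he, hne⟩ := by
          rw [Set.InjOn] at hinj
          push_neg at hinj
          exact hinj
        have hgx : gap hfx.toFinset ≤ 2*ε :=
          gap_le_of_collision hcl (Finset.mem_coe.1 h1) (Finset.mem_coe.1 h2) hne he
        have hgy : gap hfy.toFinset ≤ 4*ε := by
          by_cases hinjμ : Set.InjOn μ ↑hfy.toFinset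
          · have himgμ : hfy.toFinset.image μ = hfx.toFinset := by
              refine Finset.eq_of_subset_of_card_le ?_ ?_
              · intro u hu
                rcases Finset.mem_image.1 hu with ⟨q, hq, rfl⟩
                exact hmapsμ q hq
              · rw [Finset.card_image_of_injOn hinjμ, hcxe, hcye]
            have hsyne : hfy.toFinset.Nonempty := by
              rw [← Finset.card_pos, hcye]; omega
            obtain ⟨σ'', hinj'', himg'', hcl'', _⟩ :=
              match_inv hsyne hinjμ himgμ hclμ
            have := gap_stab (by omega : 1 < hfx.toFinset.card) hinj'' himg'' hcl''
            linarith
          · obtain ⟨q₁, hq1, q₂, hq2, heq, hneq⟩ := by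
              rw [Set.InjOn] at hinjμ
              push_neg at hinjμ
              exact hinjμ
            refine (gap_le_of_collision hclμ (Finset.mem_coe.1 hq1)
              (Finset.mem_coe.1 hq2) hneq heq).trans (by linarith)
        refine (tri_bound hn hx hy hfx hfy hcxe hcye).trans ?_
        have hpow : (0:ℝ) ≤ ((n:ℝ)-1)^2 := by positivity
        nlinarith
    · -- x has n points, y fewer
      refine (mixed hx hy hfx hfy hcxe hcyl).trans ?_
      nlinarith
  · rcases eq_or_lt_of_le hcy with hcye | hcyl
    · -- y has n points, x fewer
      rw [Metric.hausdorffDist_comm]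
      have hthis := mixed hy hx hfy hfx hcye hcxl
      have hyx : Metric.hausdorffDist y x = ε := by
        rw [hε_def, Metric.hausdorffDist_comm]
      rw [hyx] at hthis
      refine hthis.trans ?_
      nlinarith
    · -- both small : identity
      have hrx : rmap n x = x := by
        rw [rmap_of_finite n hfx, Fmap_of_ne (by omega), Set.Finite.coe_toFinset]
      have hry : rmap n y = y := by
        rw [rmap_of_finite n hfy, Fmap_of_ne (by omega), Set.Finite.coe_toFinset]
      rw [hrx, hry]
      nlinarith


/-! ### from a Lipschitz bound and a trivial bound to the Hölder bound -/

lemma holder_final {m : ℕ} (hm : 1 ≤ m) {C K E D ε : ℝ} (hC : 1 ≤ C) (hK : 0 ≤ K)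
    (hKC : K ≤ C^m) (hED : E ≤ D) (hE : E ≤ K*ε) (hε : 0 ≤ ε) (hεD : ε ≤ D) :
    E ≤ C * D^((1:ℝ) - 1/(m:ℝ)) * ε^((1:ℝ)/(m:ℝ)) := by
  have hm0 : (0:ℝ) < (m:ℝ) := by exact_mod_cast hm
  have hC0 : (0:ℝ) < C := by linarith
  have ha0 : (0:ℝ) < 1/(m:ℝ) := by positivity
  have ha1 : (1:ℝ)/(m:ℝ) ≤ 1 := by
    rw [div_le_one hm0]
    exact_mod_cast hm
  have hD0 : 0 ≤ D := hε.trans hεD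
  rcases eq_or_lt_of_le hε with hε0 | hε0
  · -- ε = 0
    rw [← hε0, Real.zero_rpow ha0.ne', mul_zero]
    rw [← hε0, mul_zero] at hE
    exact hE
  · have hD0' : 0 < D := lt_of_lt_of_le hε0 hεD
    have hCm0 : (0:ℝ) < C^m := by positivity
    have hCm : (C^m : ℝ)^((1:ℝ)/(m:ℝ)) = C := by
      rw [← Real.rpow_natCast C m, ← Real.rpow_mul hC0.le]
      rw [mul_one_div, div_self hm0.ne', Real.rpow_one]
    by_cases hcase : D ≤ C^m * ε
    · -- trivial-bound regime
      have h1 : D^((1:ℝ)/(m:ℝ)) ≤ C * ε^((1:ℝ)/(m:ℝ)) := by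
        calc D^((1:ℝ)/(m:ℝ)) ≤ (C^m * ε)^((1:ℝ)/(m:ℝ)) :=
              Real.rpow_le_rpow hD0 hcase ha0.le
          _ = (C^m : ℝ)^((1:ℝ)/(m:ℝ)) * ε^((1:ℝ)/(m:ℝ)) := Real.mul_rpow hCm0.le hε
          _ = C * ε^((1:ℝ)/(m:ℝ)) := by rw [hCm]
      have h2 : D = D^((1:ℝ) - 1/(m:ℝ)) * D^((1:ℝ)/(m:ℝ)) := by
        rw [← Real.rpow_add hD0']
        norm_num
      calc E ≤ D := hED
        _ = D^((1:ℝ) - 1/(m:ℝ)) * D^((1:ℝ)/(m:ℝ)) := h2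
        _ ≤ D^((1:ℝ) - 1/(m:ℝ)) * (C * ε^((1:ℝ)/(m:ℝ))) := by
            refine mul_le_mul_of_nonneg_left h1 ?_
            exact Real.rpow_nonneg hD0 _
        _ = C * D^((1:ℝ) - 1/(m:ℝ)) * ε^((1:ℝ)/(m:ℝ)) := by ring
    · -- Lipschitz regime
      push_neg at hcase
      have hεle : ε ≤ D / C^m := by
        rw [le_div_iff₀ hCm0]
        nlinarith
      have hsplit : ε = ε^((1:ℝ) - 1/(m:ℝ)) * ε^((1:ℝ)/(m:ℝ)) := by
        rw [← Real.rpow_add hε0]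
        norm_num
      have h1 : ε^((1:ℝ) - 1/(m:ℝ)) ≤ (D / C^m)^((1:ℝ) - 1/(m:ℝ)) :=
        Real.rpow_le_rpow hε hεle (by linarith)
      have h2 : (D / C^m : ℝ)^((1:ℝ) - 1/(m:ℝ))
          = D^((1:ℝ) - 1/(m:ℝ)) / (C^m : ℝ)^((1:ℝ) - 1/(m:ℝ)) :=
        Real.div_rpow hD0 hCm0.le _
      have h3 : K ≤ C * (C^m : ℝ)^((1:ℝ) - 1/(m:ℝ)) := by
        have he : C * (C^m : ℝ)^((1:ℝ) - 1/(m:ℝ)) = C^m := by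
          rw [← Real.rpow_natCast C m, ← Real.rpow_mul hC0.le]
          have e1 : ((m:ℝ) * ((1:ℝ) - 1/(m:ℝ))) = (m:ℝ) - 1 := by
            field_simp
          rw [e1]
          conv_rhs => rw [show ((m:ℝ)) = 1 + ((m:ℝ) - 1) from by ring]
          rw [Real.rpow_add hC0, Real.rpow_one]
        rw [he]
        exact hKC
      have hCmr0 : (0:ℝ) < (C^m : ℝ)^((1:ℝ) - 1/(m:ℝ)) := Real.rpow_pos_of_pos hCm0 _
      calc E ≤ K * ε := hE
        _ = K * (ε^((1:ℝ) - 1/(m:ℝ)) * ε^((1:ℝ)/(m:ℝ))) := by rw [← hsplit]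
        _ ≤ K * ((D / C^m)^((1:ℝ) - 1/(m:ℝ)) * ε^((1:ℝ)/(m:ℝ))) := by
            refine mul_le_mul_of_nonneg_left ?_ hK
            refine mul_le_mul_of_nonneg_right h1 (Real.rpow_nonneg hε _)
        _ = (K / (C^m : ℝ)^((1:ℝ) - 1/(m:ℝ))) * D^((1:ℝ) - 1/(m:ℝ)) * ε^((1:ℝ)/(m:ℝ)) := by
            rw [h2]; ring
        _ ≤ C * D^((1:ℝ) - 1/(m:ℝ)) * ε^((1:ℝ)/(m:ℝ)) := by
            refine mul_le_mul_of_nonneg_right (mul_le_mul_of_nonneg_right ?_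
              (Real.rpow_nonneg hD0 _)) (Real.rpow_nonneg hε _)
            rw [div_le_iff₀ hCmr0]
            calc K ≤ C * (C^m : ℝ)^((1:ℝ) - 1/(m:ℝ)) := h3
              _ = C * (C^m : ℝ)^((1:ℝ) - 1/(m:ℝ)) := rfl


lemma Kc_nonneg (n : ℕ) : 0 ≤ Kc n := by
  rw [Kc]
  split
  · norm_num
  · positivity

lemma Kc_le {n : ℕ} (hn : 2 ≤ n) : Kc n ≤ ((n:ℝ)*(2*(n:ℝ)-1))^(2*n-1) := by
  rw [Kc]
  split
  · next h =>
    subst h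
    norm_num
  · next h =>
    have hn3 : 3 ≤ n := by omega
    have h3 : (3:ℝ) ≤ (n:ℝ) := by exact_mod_cast hn3
    have hb : (n:ℝ)^2 ≤ (n:ℝ)*(2*(n:ℝ)-1) := by nlinarith
    have h1 : ((n:ℝ)^2)^(2*n-1) ≤ ((n:ℝ)*(2*(n:ℝ)-1))^(2*n-1) :=
      pow_le_pow_left₀ (sq_nonneg _) hb _
    have h2 : ((n:ℝ)^2)^(2*n-1) = (n:ℝ)^(2*(2*n-1)) := by
      rw [← pow_mul]
    have h4 : (10:ℕ) ≤ 2*(2*n-1) := by omega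
    have hn1 : (1:ℝ) ≤ (n:ℝ) := by linarith
    have h5 : (n:ℝ)^(10:ℕ) ≤ (n:ℝ)^(2*(2*n-1)) := pow_le_pow_right₀ hn1 h4
    have h6 : 800*(n:ℝ)^3 ≤ (n:ℝ)^(10:ℕ) := by
      have h7 : (3:ℝ)^(7:ℕ) ≤ (n:ℝ)^(7:ℕ) := pow_le_pow_left₀ (by norm_num) h3 _
      have h8 : (n:ℝ)^(10:ℕ) = (n:ℝ)^(7:ℕ) * (n:ℝ)^3 := by ring
      have h9 : (3:ℝ)^(7:ℕ) = 2187 := by norm_num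
      rw [h8]
      refine mul_le_mul_of_nonneg_right ?_ (by positivity)
      nlinarith
    calc 800*(n:ℝ)^3 ≤ (n:ℝ)^(10:ℕ) := h6
      _ ≤ (n:ℝ)^(2*(2*n-1)) := h5
      _ = ((n:ℝ)^2)^(2*n-1) := h2.symm
      _ ≤ ((n:ℝ)*(2*(n:ℝ)-1))^(2*n-1) := h1

end Stmt12


/-- For any normed space `X` and `n ≥ 2`, there is a retraction `X(n) → X(n-1)`
which is Hölder continuous with exponent `1/(2n-1)` on bounded sets:
`d_H(r x, r y) ≤ n(2n-1) · diam(x ∪ y)^{1 - 1/(2n-1)} · d_H(x,y)^{1/(2n-1)}`. -/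
theorem stmt_12 {X : Type*} [NormedAddCommGroup X] [NormedSpace ℝ X]
    (n : ℕ) (hn : 2 ≤ n) :
    ∃ r : Set X → Set X,
      (∀ x : Set X, x.Nonempty → x.encard ≤ n →
        (r x).Nonempty ∧ (r x).encard ≤ n - 1) ∧
      (∀ x : Set X, x.Nonempty → x.encard ≤ n - 1 → r x = x) ∧
      (∀ x y : Set X, x.Nonempty → x.encard ≤ n → y.Nonempty → y.encard ≤ n →
        Metric.hausdorffDist (r x) (r y) ≤
          (n : ℝ) * (2 * (n : ℝ) - 1) *
            Metric.diam (x ∪ y) ^ ((1 : ℝ) - 1 / (2 * (n : ℝ) - 1)) *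
            Metric.hausdorffDist x y ^ ((1 : ℝ) / (2 * (n : ℝ) - 1))) := by
  refine ⟨Stmt12.rmap n, ?_, ?_, ?_⟩
  · intro x hx hxc
    exact Stmt12.rmap_spec1 hn hx hxc
  · intro x hx hxc
    exact Stmt12.rmap_retract hn hx hxc
  · intro x y hx hxc hy hyc
    have hfx := Stmt12.finite_of_encard_le hxc
    have hfy := Stmt12.finite_of_encard_le hyc
    have hcx := Stmt12.toFinset_card_le hfx hxc
    have hcy := Stmt12.toFinset_card_le hfy hyc
    have hED : Metric.hausdorffDist (Stmt12.rmap n x) (Stmt12.rmap n y) ≤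
        Metric.diam (x ∪ y) := Stmt12.E_le_D hn hx hy hfx hfy
    have hE : Metric.hausdorffDist (Stmt12.rmap n x) (Stmt12.rmap n y) ≤
        Stmt12.Kc n * Metric.hausdorffDist x y := Stmt12.driver hn hx hy hfx hfy hcx hcy
    have hεD : Metric.hausdorffDist x y ≤ Metric.diam (x ∪ y) :=
      Stmt12.hd_le_diam hx hy hfx hfy
    have hC : (1:ℝ) ≤ (n:ℝ)*(2*(n:ℝ)-1) := by
      have h2 : (2:ℝ) ≤ (n:ℝ) := by exact_mod_cast hn
      nlinarith
    have hmain := Stmt12.holder_final (m := 2*n-1) (by omega)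
      hC (Stmt12.Kc_nonneg n) (Stmt12.Kc_le hn) hED hE
      Metric.hausdorffDist_nonneg hεD
    have hcast : ((2*n-1 : ℕ) : ℝ) = 2*(n:ℝ)-1 := by
      have h1 : (1:ℕ) ≤ 2*n := by omega
      push_cast [Nat.cast_sub h1]
      ring
    rwa [hcast] at hmain
end
end

section
/- For every n ≥ 3 there exist finite subsets x, y ⊆ ℝ, each with exactly n elements, such that x ≠ y and for every nonempty finite subset z ⊆ ℝ with at most n elements, d_H(x, y) ≤ max(d_H(x, z), d_H(z, y)). That is, the finite subset space ℝ(n) contains spaced pairs for all n ≥ 3. -/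
open Metric Set

/-- For every `n ≥ 3`, the finite subset space `ℝ(n)` contains a spaced pair:
two distinct `n`-element subsets `x, y` of `ℝ` with
`d_H(x,y) ≤ max (d_H(x,z)) (d_H(z,y))` for every nonempty `z` with at most `n`
elements. -/
theorem stmt_13 (n : ℕ) (hn : 3 ≤ n) :
    ∃ x y : Set ℝ, x.encard = n ∧ y.encard = n ∧ x ≠ y ∧
      ∀ z : Set ℝ, z.Nonempty → z.encard ≤ n →
        Metric.hausdorffDist x y ≤
          max (Metric.hausdorffDist x z) (Metric.hausdorffDist z y) := by
  classical
  set g : ℕ → ℝ := fun k => 1000 * (k + 1) with hgdef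
  have hginj : Function.Injective g := by
    intro a b hab
    simp only [hgdef] at hab
    have : (a : ℝ) = b := by linarith
    exact_mod_cast this
  have hgge : ∀ k, (1000 : ℝ) ≤ g k := by
    intro k
    have : (0 : ℝ) ≤ k := Nat.cast_nonneg k
    simp only [hgdef]
    nlinarith
  set Fn : Finset ℝ := (Finset.range (n - 3)).image g with hFn
  have hFnmem : ∀ p ∈ Fn, ∃ k, g k = p := by
    intro p hp
    simp only [hFn, Finset.mem_image, Finset.mem_range] at hp
    obtain ⟨k, _, hk⟩ := hp
    exact ⟨k, hk⟩
  set A : Finset ℝ := {0, 2, 101} with hA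
  set B : Finset ℝ := {1, 100, 102} with hB
  set X : Finset ℝ := A ∪ Fn with hX
  set Y : Finset ℝ := B ∪ Fn with hY
  -- small helper: elements of Fn are ≥ 1000
  have hFnge : ∀ p ∈ Fn, (1000 : ℝ) ≤ p := by
    intro p hp
    obtain ⟨k, hk⟩ := hFnmem p hp
    rw [← hk]; exact hgge k
  have hdisjA : Disjoint A Fn := by
    rw [Finset.disjoint_left]
    intro p hp hp'
    have := hFnge p hp'
    simp only [hA, Finset.mem_insert, Finset.mem_singleton] at hp
    rcases hp with rfl | rfl | rfl <;> norm_num at this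
  have hdisjB : Disjoint B Fn := by
    rw [Finset.disjoint_left]
    intro p hp hp'
    have := hFnge p hp'
    simp only [hB, Finset.mem_insert, Finset.mem_singleton] at hp
    rcases hp with rfl | rfl | rfl <;> norm_num at this
  have hFncard : Fn.card = n - 3 := by
    rw [hFn, Finset.card_image_of_injective _ hginj, Finset.card_range]
  have hXcard : X.card = n := by
    rw [hX, Finset.card_union_of_disjoint hdisjA, hFncard, hA]
    rw [show ({0, 2, 101} : Finset ℝ).card = 3 by norm_num]
    omega
  have hYcard : Y.card = n := by
    rw [hY, Finset.card_union_of_disjoint hdisjB, hFncard, hB]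
    rw [show ({1, 100, 102} : Finset ℝ).card = 3 by norm_num]
    omega
  refine ⟨(X : Set ℝ), (Y : Set ℝ), ?_, ?_, ?_, ?_⟩
  · rw [Set.encard_coe_eq_coe_finsetCard, hXcard]
  · rw [Set.encard_coe_eq_coe_finsetCard, hYcard]
  · -- x ≠ y since 0 ∈ X, 0 ∉ Y
    intro h
    have h0 : (0 : ℝ) ∈ (X : Set ℝ) := by
      simp [hX, hA]
    rw [h] at h0
    simp only [Finset.coe_union, Set.mem_union, Finset.mem_coe, hY, hB] at h0
    rcases h0 with h0 | h0
    · simp at h0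
    · have := hFnge 0 h0; norm_num at this
  · intro z hz hzcard
    -- basic finiteness facts
    have hzfin : z.Finite := by
      rw [← Set.encard_lt_top_iff]
      exact lt_of_le_of_lt hzcard (by simp)
    have hXne : (X : Set ℝ).Nonempty := ⟨0, by simp [hX, hA]⟩
    have hYne : (Y : Set ℝ).Nonempty := ⟨1, by simp [hY, hB]⟩
    have hXb : Bornology.IsBounded (X : Set ℝ) := X.finite_toSet.isBounded
    have hYb : Bornology.IsBounded (Y : Set ℝ) := Y.finite_toSet.isBounded
    have hzb : Bornology.IsBounded z := hzfin.isBounded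
    -- membership descriptions
    have hXmem : ∀ p : ℝ, p ∈ X → p = 0 ∨ p = 2 ∨ p = 101 ∨ ∃ k, g k = p := by
      intro p hp
      rw [hX, Finset.mem_union] at hp
      rcases hp with hp | hp
      · simp only [hA, Finset.mem_insert, Finset.mem_singleton] at hp
        tauto
      · exact Or.inr (Or.inr (Or.inr (hFnmem p hp)))
    have hYmem : ∀ p : ℝ, p ∈ Y → p = 1 ∨ p = 100 ∨ p = 102 ∨ ∃ k, g k = p := by
      intro p hp
      rw [hY, Finset.mem_union] at hp
      rcases hp with hp | hp
      · simp only [hB, Finset.mem_insert, Finset.mem_singleton] at hp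
        tauto
      · exact Or.inr (Or.inr (Or.inr (hFnmem p hp)))
    -- d_H(X,Y) ≤ 1
    have hxy1 : hausdorffDist (X : Set ℝ) (Y : Set ℝ) ≤ 1 := by
      apply Metric.hausdorffDist_le_of_mem_dist (by norm_num)
      · intro a ha
        rw [hX, Finset.coe_union, Set.mem_union] at ha
        rcases ha with ha | ha
        · simp only [hA, Finset.coe_insert, Set.mem_insert_iff, Finset.coe_singleton,
            Set.mem_singleton_iff] at ha
          rcases ha with rfl | rfl | rfl
          · exact ⟨1, by simp [hY, hB], by norm_num [Real.dist_eq]⟩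
          · exact ⟨1, by simp [hY, hB], by norm_num [Real.dist_eq]⟩
          · exact ⟨100, by simp [hY, hB], by norm_num [Real.dist_eq]⟩
        · refine ⟨a, ?_, by simp⟩
          rw [hY]
          exact Finset.mem_coe.mpr (Finset.mem_union_right _ (Finset.mem_coe.mp ha))
      · intro b hb
        rw [hY, Finset.coe_union, Set.mem_union] at hb
        rcases hb with hb | hb
        · simp only [hB, Finset.coe_insert, Set.mem_insert_iff, Finset.coe_singleton,
            Set.mem_singleton_iff] at hb
          rcases hb with rfl | rfl | rfl
          · exact ⟨0, by simp [hX, hA], by norm_num [Real.dist_eq]⟩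
          · exact ⟨101, by simp [hX, hA], by norm_num [Real.dist_eq]⟩
          · exact ⟨101, by simp [hX, hA], by norm_num [Real.dist_eq]⟩
        · refine ⟨b, ?_, by simp⟩
          rw [hX]
          exact Finset.mem_coe.mpr (Finset.mem_union_right _ (Finset.mem_coe.mp hb))
    -- main argument
    by_contra hcon
    push_neg at hcon
    have hxz : hausdorffDist (X : Set ℝ) z < 1 :=
      lt_of_lt_of_le (lt_of_le_of_lt (le_max_left _ _) hcon) hxy1
    have hzy : hausdorffDist z (Y : Set ℝ) < 1 :=
      lt_of_lt_of_le (lt_of_le_of_lt (le_max_right _ _) hcon) hxy1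
    have finxz : EMetric.hausdorffEdist (X : Set ℝ) z ≠ ⊤ :=
      Metric.hausdorffEdist_ne_top_of_nonempty_of_bounded hXne hz hXb hzb
    have finyz : EMetric.hausdorffEdist (Y : Set ℝ) z ≠ ⊤ :=
      Metric.hausdorffEdist_ne_top_of_nonempty_of_bounded hYne hz hYb hzb
    have hnear : ∀ p : ℝ, p ∈ X ∪ Y → ∃ w ∈ z, dist p w < 1 := by
      intro p hp
      rw [Finset.mem_union] at hp
      rcases hp with hp | hp
      · have h1 : infDist p z ≤ hausdorffDist (X : Set ℝ) z :=
          Metric.infDist_le_hausdorffDist_of_mem (Finset.mem_coe.mpr hp) finxz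
        exact (Metric.infDist_lt_iff hz).mp (lt_of_le_of_lt h1 hxz)
      · have h1 : infDist p z ≤ hausdorffDist (Y : Set ℝ) z :=
          Metric.infDist_le_hausdorffDist_of_mem (Finset.mem_coe.mpr hp) finyz
        have h2 : hausdorffDist (Y : Set ℝ) z < 1 := by
          rwa [Metric.hausdorffDist_comm] at hzy
        exact (Metric.infDist_lt_iff hz).mp (lt_of_le_of_lt h1 h2)
    -- demand set of n + 1 pairwise 2-separated points in X ∪ Y
    set D : Finset ℝ := {0, 2, 100, 102} ∪ Fn with hD
    have hdisjD : Disjoint ({0, 2, 100, 102} : Finset ℝ) Fn := by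
      rw [Finset.disjoint_left]
      intro p hp hp'
      have := hFnge p hp'
      simp only [Finset.mem_insert, Finset.mem_singleton] at hp
      rcases hp with rfl | rfl | rfl | rfl <;> norm_num at this
    have hDcard : D.card = n + 1 := by
      rw [hD, Finset.card_union_of_disjoint hdisjD, hFncard]
      rw [show ({0, 2, 100, 102} : Finset ℝ).card = 4 by norm_num]
      omega
    have hDmem : ∀ p ∈ D, p = 0 ∨ p = 2 ∨ p = 100 ∨ p = 102 ∨ ∃ k, g k = p := by
      intro p hp
      rw [hD, Finset.mem_union] at hp
      rcases hp with hp | hp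
      · simp only [Finset.mem_insert, Finset.mem_singleton] at hp
        tauto
      · exact Or.inr (Or.inr (Or.inr (Or.inr (hFnmem p hp))))
    have hDsub : ∀ p ∈ D, p ∈ X ∪ Y := by
      intro p hp
      rw [hD, Finset.mem_union] at hp
      rcases hp with hp | hp
      · simp only [Finset.mem_insert, Finset.mem_singleton] at hp
        rcases hp with rfl | rfl | rfl | rfl
        · exact Finset.mem_union_left _ (by rw [hX]; exact Finset.mem_union_left _ (by simp [hA]))
        · exact Finset.mem_union_left _ (by rw [hX]; exact Finset.mem_union_left _ (by simp [hA]))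
        · exact Finset.mem_union_right _ (by rw [hY]; exact Finset.mem_union_left _ (by simp [hB]))
        · exact Finset.mem_union_right _ (by rw [hY]; exact Finset.mem_union_left _ (by simp [hB]))
      · exact Finset.mem_union_left _ (by rw [hX]; exact Finset.mem_union_right _ hp)
    have hga : ∀ a : ℝ, 0 ≤ a → a ≤ 102 → ∀ k, 2 ≤ |a - g k| := by
      intro a h0 h1 k
      have := hgge k
      rw [abs_sub_comm, abs_of_nonneg (by linarith)]
      linarith
    have hgsep : ∀ k j : ℕ, g k ≠ g j → 2 ≤ |g k - g j| := by
      intro k j hne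
      have hkj : (k : ℤ) ≠ j := by
        intro h
        exact hne (congrArg g (by exact_mod_cast h))
      have h1 : (1 : ℤ) ≤ |(k : ℤ) - j| := Int.one_le_abs (sub_ne_zero.mpr hkj)
      have h1' : (1 : ℝ) ≤ |(k : ℝ) - j| := by
        have : ((1 : ℤ) : ℝ) ≤ ((|(k : ℤ) - j| : ℤ) : ℝ) := by exact_mod_cast h1
        push_cast at this
        exact this
      have : g k - g j = 1000 * ((k : ℝ) - j) := by simp only [hgdef]; ring
      rw [this, abs_mul, abs_of_nonneg (by norm_num : (0:ℝ) ≤ 1000)]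
      nlinarith [abs_nonneg ((k : ℝ) - j)]
    have hga0 : ∀ k, 2 ≤ |(0 : ℝ) - g k| := fun k => hga 0 (by norm_num) (by norm_num) k
    have hga2 : ∀ k, 2 ≤ |(2 : ℝ) - g k| := fun k => hga 2 (by norm_num) (by norm_num) k
    have hga100 : ∀ k, 2 ≤ |(100 : ℝ) - g k| := fun k => hga 100 (by norm_num) (by norm_num) k
    have hga102 : ∀ k, 2 ≤ |(102 : ℝ) - g k| := fun k => hga 102 (by norm_num) (by norm_num) k
    have hsep : ∀ p ∈ D, ∀ q ∈ D, p ≠ q → 2 ≤ |p - q| := by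
      intro p hp q hq hne
      rcases hDmem p hp with rfl | rfl | rfl | rfl | ⟨k, rfl⟩ <;>
        rcases hDmem q hq with rfl | rfl | rfl | rfl | ⟨j, rfl⟩ <;>
        first
          | exact absurd rfl hne
          | exact hga0 j
          | exact hga2 j
          | exact hga100 j
          | exact hga102 j
          | (rw [abs_sub_comm]; exact hga0 k)
          | (rw [abs_sub_comm]; exact hga2 k)
          | (rw [abs_sub_comm]; exact hga100 k)
          | (rw [abs_sub_comm]; exact hga102 k)
          | exact hgsep k j hne
          | norm_num
    -- choose nearby z-points and count
    have hch : ∀ p ∈ D, ∃ w ∈ z, dist p w < 1 := fun p hp => hnear p (hDsub p hp)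
    choose! w hw1 hw2 using hch
    have hmaps : ∀ p ∈ D, w p ∈ hzfin.toFinset := by
      intro p hp
      rw [Set.Finite.mem_toFinset]
      exact hw1 p hp
    have hinj : Set.InjOn w ↑D := by
      intro p hp q hq heq
      by_contra hne
      have hp' : p ∈ D := Finset.mem_coe.mp hp
      have hq' : q ∈ D := Finset.mem_coe.mp hq
      have h2 := hsep p hp' q hq' hne
      have hd : dist p q < 2 := by
        have h1 := hw2 p hp'
        have hq2 := hw2 q hq'
        calc dist p q ≤ dist p (w p) + dist (w p) q := dist_triangle _ _ _
          _ = dist p (w p) + dist q (w q) := by rw [heq, dist_comm (w q) q]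
          _ < 1 + 1 := by linarith
          _ = 2 := by norm_num
      rw [Real.dist_eq] at hd
      linarith
    have hcard := Finset.card_le_card_of_injOn w hmaps hinj
    have hzcard' : hzfin.toFinset.card ≤ n := by
      have h : ((hzfin.toFinset.card : ℕ) : ℕ∞) ≤ (n : ℕ∞) := by
        rw [← Set.encard_coe_eq_coe_finsetCard, Set.Finite.coe_toFinset]
        exact hzcard
      exact_mod_cast h
    omega
end

section
/- Let X be a metric space and let x, y be nonempty finite subsets of X. Then there exist subsets x' ⊆ x and y'' ⊆ y and maps f : x' → y and g : y'' → x such that dist(a, f(a)) ≤ d_H(x, y) for all a ∈ x', dist(g(b), b) ≤ d_H(x, y) for all b ∈ y'', and x = x' ∪ g(y'') with x' ∩ g(y'') = ∅, y = f(x') ∪ y'' with f(x') ∩ y'' = ∅. -/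
open Finset in
lemma key_star {X : Type*} [DecidableEq X] (R : X → X → Prop) :
    ∀ (n : ℕ) (s t : Finset X), s.card = n →
      (∀ a ∈ s, ∃ b ∈ t, R a b) → (∀ b ∈ t, ∃ a ∈ s, R a b) →
      ∃ (x' y'' : Finset X) (f g : X → X), x' ⊆ s ∧ y'' ⊆ t ∧
        (∀ a ∈ x', f a ∈ t ∧ R a (f a)) ∧
        (∀ b ∈ y'', g b ∈ s ∧ R (g b) b) ∧
        s = x' ∪ y''.image g ∧ x' ∩ y''.image g = ∅ ∧
        t = x'.image f ∪ y'' ∧ x'.image f ∩ y'' = ∅ := by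
  intro n
  induction n with
  | zero =>
    intro s t hcard h1 h2
    have hs : s = ∅ := Finset.card_eq_zero.mp hcard
    subst hs
    have ht : t = ∅ := by
      by_contra h
      obtain ⟨b, hb⟩ := Finset.nonempty_iff_ne_empty.mpr h
      obtain ⟨a, ha, -⟩ := h2 b hb
      exact absurd ha (Finset.notMem_empty a)
    subst ht
    exact ⟨∅, ∅, id, id, by simp⟩
  | succ n ih =>
    intro s t hcard h1 h2
    classical
    obtain ⟨a, ha⟩ := Finset.card_pos.mp (by rw [hcard]; exact n.succ_pos)
    set T : Finset X := t.filter (fun b => R a b ∧ ∀ a' ∈ s.erase a, ¬ R a' b) with hT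
    by_cases hTne : T.Nonempty
    · -- Case 1: remove the star centered at a, with leaves T
      have hcard' : (s.erase a).card = n := by
        rw [Finset.card_erase_of_mem ha, hcard]; rfl
      have h1' : ∀ a' ∈ s.erase a, ∃ b ∈ t \ T, R a' b := by
        intro a' ha'
        obtain ⟨b, hb, hR⟩ := h1 a' (Finset.mem_of_mem_erase ha')
        refine ⟨b, Finset.mem_sdiff.mpr ⟨hb, fun hbT => ?_⟩, hR⟩
        exact (Finset.mem_filter.mp hbT).2.2 a' ha' hR
      have h2' : ∀ b ∈ t \ T, ∃ a' ∈ s.erase a, R a' b := by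
        intro b hb
        rw [Finset.mem_sdiff] at hb
        by_contra h
        push_neg at h
        apply hb.2
        refine Finset.mem_filter.mpr ⟨hb.1, ?_, h⟩
        obtain ⟨a₀, ha₀, hR₀⟩ := h2 b hb.1
        rcases eq_or_ne a₀ a with rfl | hne
        · exact hR₀
        · exact absurd hR₀ (h a₀ (Finset.mem_erase.mpr ⟨hne, ha₀⟩))
      obtain ⟨x₁, y₁, f, g, hx₁, hy₁, hf, hg, hseq, hsdisj, hteq, htdisj⟩ :=
        ih (s.erase a) (t \ T) hcard' h1' h2'
      refine ⟨x₁, y₁ ∪ T, f, fun b => if b ∈ T then a else g b, ?_, ?_, ?_, ?_, ?_, ?_, ?_, ?_⟩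
      · exact hx₁.trans (Finset.erase_subset a s)
      · exact Finset.union_subset (hy₁.trans (Finset.sdiff_subset)) (Finset.filter_subset _ t)
      · intro a' ha'
        obtain ⟨h₁, h₂⟩ := hf a' ha'
        exact ⟨Finset.mem_sdiff.mp h₁ |>.1, h₂⟩
      · intro b hb
        by_cases hbT : b ∈ T
        · simp only [hbT, if_pos]
          exact ⟨ha, (Finset.mem_filter.mp hbT).2.1⟩
        · have hby : b ∈ y₁ := (Finset.mem_union.mp hb).resolve_right hbT
          simp only [hbT, if_neg, if_false]
          exact ⟨Finset.mem_of_mem_erase (hg b hby).1, (hg b hby).2⟩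
      · -- s = x₁ ∪ (y₁ ∪ T).image g'
        have himg : (y₁ ∪ T).image (fun b => if b ∈ T then a else g b)
            = y₁.image g ∪ {a} := by
          ext c
          simp only [Finset.mem_image, Finset.mem_union, Finset.mem_singleton]
          constructor
          · rintro ⟨b, hb, rfl⟩
            rcases hb with hb | hb
            · have hbT : b ∉ T := fun h =>
                (Finset.mem_sdiff.mp (hy₁ hb)).2 h
              exact Or.inl ⟨b, hb, by simp [hbT]⟩
            · exact Or.inr (by simp [hb])
          · rintro (⟨b, hb, rfl⟩ | rfl)
            · have hbT : b ∉ T := fun h => (Finset.mem_sdiff.mp (hy₁ hb)).2 h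
              exact ⟨b, Or.inl hb, by simp [hbT]⟩
            · obtain ⟨b, hb⟩ := hTne
              exact ⟨b, Or.inr hb, by simp [hb]⟩
        rw [himg, ← Finset.union_assoc, ← hseq]
        rw [Finset.union_comm, ← Finset.insert_eq]; exact (Finset.insert_erase ha).symm
      · have himg : (y₁ ∪ T).image (fun b => if b ∈ T then a else g b)
            ⊆ y₁.image g ∪ {a} := by
          intro c hc
          obtain ⟨b, hb, rfl⟩ := Finset.mem_image.mp hc
          rcases Finset.mem_union.mp hb with hb | hb
          · have hbT : b ∉ T := fun h => (Finset.mem_sdiff.mp (hy₁ hb)).2 h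
            exact Finset.mem_union_left _ (Finset.mem_image.mpr ⟨b, hb, by simp [hbT]⟩)
          · simp [hb]
        rw [← Finset.subset_empty]
        intro c hc
        rw [Finset.mem_inter] at hc
        have hc2 := himg hc.2
        rcases Finset.mem_union.mp hc2 with h | h
        · rw [← hsdisj]; exact Finset.mem_inter.mpr ⟨hc.1, h⟩
        · have : c = a := Finset.mem_singleton.mp h
          subst this
          exact absurd (hx₁ hc.1) (Finset.notMem_erase c s)
      · rw [← Finset.union_assoc, ← hteq, Finset.sdiff_union_of_subset (Finset.filter_subset _ t)]
      · rw [← Finset.subset_empty]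
        intro c hc
        rw [Finset.mem_inter, Finset.mem_union] at hc
        rcases hc.2 with h | h
        · rw [← htdisj]; exact Finset.mem_inter.mpr ⟨hc.1, h⟩
        · have : c ∈ t \ T := hteq ▸ Finset.mem_union_left _ hc.1
          exact absurd h (Finset.mem_sdiff.mp this).2
    · -- Case 2: T = ∅, remove a alone and reattach it as a leaf
      have hcard' : (s.erase a).card = n := by
        rw [Finset.card_erase_of_mem ha, hcard]; rfl
      have h1' : ∀ a' ∈ s.erase a, ∃ b ∈ t, R a' b :=
        fun a' ha' => h1 a' (Finset.mem_of_mem_erase ha')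
      have h2' : ∀ b ∈ t, ∃ a' ∈ s.erase a, R a' b := by
        intro b hb
        by_contra h
        push_neg at h
        apply hTne
        refine ⟨b, Finset.mem_filter.mpr ⟨hb, ?_, h⟩⟩
        obtain ⟨a₀, ha₀, hR₀⟩ := h2 b hb
        rcases eq_or_ne a₀ a with rfl | hne
        · exact hR₀
        · exact absurd hR₀ (h a₀ (Finset.mem_erase.mpr ⟨hne, ha₀⟩))
      obtain ⟨x₁, y₁, f, g, hx₁, hy₁, hf, hg, hseq, hsdisj, hteq, htdisj⟩ :=
        ih (s.erase a) t hcard' h1' h2'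
      obtain ⟨b₀, hb₀t, hRab₀⟩ := h1 a ha
      set D : Finset X := (y₁.image g) \ ((y₁.erase b₀).image g) with hD
      have haerase : a ∉ s.erase a := Finset.notMem_erase a s
      have hax₁ : a ∉ x₁ := fun h => haerase (hx₁ h)
      have hgsub : y₁.image g ⊆ s.erase a := by
        intro c hc
        obtain ⟨b, hb, rfl⟩ := Finset.mem_image.mp hc
        exact (hg b hb).1
      refine ⟨insert a (x₁ ∪ D), y₁.erase b₀,
        fun c => if c ∈ x₁ then f c else b₀, g, ?_, ?_, ?_, ?_, ?_, ?_, ?_, ?_⟩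
      · refine Finset.insert_subset ha (Finset.union_subset (hx₁.trans (Finset.erase_subset a s)) ?_)
        exact (Finset.sdiff_subset.trans hgsub).trans (Finset.erase_subset a s)
      · exact (Finset.erase_subset b₀ y₁).trans hy₁
      · intro c hc
        by_cases hcx : c ∈ x₁
        · simp only [hcx, if_pos]
          exact hf c hcx
        · simp only [hcx, if_neg, if_false]
          refine ⟨hb₀t, ?_⟩
          rcases Finset.mem_insert.mp hc with rfl | hc'
          · exact hRab₀
          · have hcD : c ∈ D := (Finset.mem_union.mp hc').resolve_left hcx
            rw [hD, Finset.mem_sdiff] at hcD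
            obtain ⟨b, hb, rfl⟩ := Finset.mem_image.mp hcD.1
            have : b = b₀ := by
              by_contra hne
              exact hcD.2 (Finset.mem_image.mpr ⟨b, Finset.mem_erase.mpr ⟨hne, hb⟩, rfl⟩)
            subst this
            exact (hg b hb).2
      · intro b hb
        have hby : b ∈ y₁ := Finset.mem_of_mem_erase hb
        exact ⟨Finset.mem_of_mem_erase (hg b hby).1, (hg b hby).2⟩
      · -- s = insert a (x₁ ∪ D) ∪ (y₁.erase b₀).image g
        have hDu : D ∪ (y₁.erase b₀).image g = y₁.image g := by
          rw [hD, Finset.sdiff_union_self_eq_union, Finset.union_eq_left]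
          exact Finset.image_subset_image (Finset.erase_subset b₀ y₁)
        rw [Finset.insert_union, Finset.union_assoc, hDu, ← hseq, Finset.insert_erase ha]
      · rw [← Finset.subset_empty]
        intro c hc
        rw [Finset.mem_inter] at hc
        have hcy : c ∈ (y₁.erase b₀).image g := hc.2
        have hcy₁ : c ∈ y₁.image g :=
          Finset.image_subset_image (Finset.erase_subset b₀ y₁) hcy
        rcases Finset.mem_insert.mp hc.1 with rfl | hc'
        · exact absurd (hgsub hcy₁) haerase
        · rcases Finset.mem_union.mp hc' with h | h
          · rw [← hsdisj]; exact Finset.mem_inter.mpr ⟨h, hcy₁⟩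
          · rw [hD, Finset.mem_sdiff] at h
            exact absurd hcy h.2
      · -- t = (insert a (x₁ ∪ D)).image f' ∪ y₁.erase b₀
        have himg : (insert a (x₁ ∪ D)).image (fun c => if c ∈ x₁ then f c else b₀)
            = x₁.image f ∪ {b₀} := by
          ext c
          simp only [Finset.mem_image, Finset.mem_insert, Finset.mem_union,
            Finset.mem_singleton]
          constructor
          · rintro ⟨d, hd, rfl⟩
            by_cases hdx : d ∈ x₁
            · exact Or.inl ⟨d, hdx, by simp [hdx]⟩
            · exact Or.inr (by simp [hdx])
          · rintro (⟨d, hd, rfl⟩ | rfl)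
            · exact ⟨d, Or.inr (Or.inl hd), by simp [hd]⟩
            · exact ⟨a, Or.inl rfl, by simp [hax₁]⟩
        rw [himg]
        ext c
        simp only [Finset.mem_union, Finset.mem_singleton, Finset.mem_erase]
        constructor
        · intro hct
          have : c ∈ x₁.image f ∪ y₁ := hteq ▸ hct
          rcases Finset.mem_union.mp this with h | h
          · exact Or.inl (Or.inl h)
          · rcases eq_or_ne c b₀ with rfl | hne
            · exact Or.inl (Or.inr rfl)
            · exact Or.inr ⟨hne, h⟩
        · rintro ((h | rfl) | ⟨-, h⟩)
          · exact hteq ▸ Finset.mem_union_left _ h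
          · exact hb₀t
          · exact hteq ▸ Finset.mem_union_right _ h
      · have himg : (insert a (x₁ ∪ D)).image (fun c => if c ∈ x₁ then f c else b₀)
            ⊆ x₁.image f ∪ {b₀} := by
          intro c hc
          obtain ⟨d, hd, rfl⟩ := Finset.mem_image.mp hc
          by_cases hdx : d ∈ x₁
          · exact Finset.mem_union_left _ (Finset.mem_image.mpr ⟨d, hdx, by simp [hdx]⟩)
          · simp [hdx]
        rw [← Finset.subset_empty]
        intro c hc
        rw [Finset.mem_inter] at hc
        have hcy : c ∈ y₁.erase b₀ := hc.2
        rcases Finset.mem_union.mp (himg hc.1) with h | h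
        · rw [← htdisj]
          exact Finset.mem_inter.mpr ⟨h, Finset.mem_of_mem_erase hcy⟩
        · exact absurd (Finset.mem_singleton.mp h) (Finset.mem_erase.mp hcy).1

/-- For nonempty finite subsets `x, y` of a metric space there are proximal maps
`f : x' ⊆ x → y` and `g : y'' ⊆ y → x` with `x = x' ⊔ g(y'')` and
`y = f(x') ⊔ y''`. -/
theorem stmt_15 {X : Type*} [MetricSpace X] (x y : Set X)
    (hxfin : x.Finite) (hyfin : y.Finite) (hxne : x.Nonempty) (hyne : y.Nonempty) :
    ∃ (x' y'' : Set X) (f g : X → X), x' ⊆ x ∧ y'' ⊆ y ∧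
      (∀ a ∈ x', f a ∈ y ∧ dist a (f a) ≤ Metric.hausdorffDist x y) ∧
      (∀ b ∈ y'', g b ∈ x ∧ dist (g b) b ≤ Metric.hausdorffDist x y) ∧
      x = x' ∪ g '' y'' ∧ x' ∩ g '' y'' = ∅ ∧
      y = f '' x' ∪ y'' ∧ f '' x' ∩ y'' = ∅ := by
  classical
  have hne : EMetric.hausdorffEdist x y ≠ ⊤ :=
    Metric.hausdorffEdist_ne_top_of_nonempty_of_bounded hxne hyne hxfin.isBounded
      hyfin.isBounded
  have hne' : EMetric.hausdorffEdist y x ≠ ⊤ := by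
    have h := hne
    unfold EMetric.hausdorffEdist at h ⊢
    rwa [Metric.hausdorffEDist_comm]
  set r := Metric.hausdorffDist x y with hr
  set s : Finset X := hxfin.toFinset with hs
  set t : Finset X := hyfin.toFinset with ht
  have hscoe : (s : Set X) = x := hxfin.coe_toFinset
  have htcoe : (t : Set X) = y := hyfin.coe_toFinset
  have h1 : ∀ a ∈ s, ∃ b ∈ t, dist a b ≤ r := by
    intro a has
    have hax : a ∈ x := by rw [← hscoe]; exact_mod_cast has
    obtain ⟨b, hb, hdb⟩ := hyfin.isCompact.exists_infDist_eq_dist hyne a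
    refine ⟨b, by rw [ht, hyfin.mem_toFinset]; exact hb, ?_⟩
    rw [← hdb]
    exact Metric.infDist_le_hausdorffDist_of_mem hax hne
  have h2 : ∀ b ∈ t, ∃ a ∈ s, dist a b ≤ r := by
    intro b hbt
    have hby : b ∈ y := by rw [← htcoe]; exact_mod_cast hbt
    obtain ⟨a, ha, hda⟩ := hxfin.isCompact.exists_infDist_eq_dist hxne b
    refine ⟨a, by rw [hs, hxfin.mem_toFinset]; exact ha, ?_⟩
    rw [dist_comm, ← hda, hr, Metric.hausdorffDist_comm]
    exact Metric.infDist_le_hausdorffDist_of_mem hby hne'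
  obtain ⟨x', y'', f, g, hx', hy'', hf, hg, hseq, hsdisj, hteq, htdisj⟩ :=
    key_star (fun a b => dist a b ≤ r) s.card s t rfl h1 h2
  refine ⟨(x' : Set X), (y'' : Set X), f, g, ?_, ?_, ?_, ?_, ?_, ?_, ?_, ?_⟩
  · rw [← hscoe]; exact_mod_cast hx'
  · rw [← htcoe]; exact_mod_cast hy''
  · intro a hax'
    obtain ⟨hft, hfd⟩ := hf a (by exact_mod_cast hax')
    exact ⟨by rw [← htcoe]; exact_mod_cast hft, hfd⟩
  · intro b hby''
    obtain ⟨hgs, hgd⟩ := hg b (by exact_mod_cast hby'')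
    exact ⟨by rw [← hscoe]; exact_mod_cast hgs, hgd⟩
  · rw [← hscoe, hseq]; push_cast; rfl
  · have : ((x' ∩ y''.image g : Finset X) : Set X) = (∅ : Set X) := by
      rw [hsdisj]; simp
    rwa [Finset.coe_inter, Finset.coe_image] at this
  · rw [← htcoe, hteq]; push_cast; rfl
  · have : ((x'.image f ∩ y'' : Finset X) : Set X) = (∅ : Set X) := by
      rw [htdisj]; simp
    rwa [Finset.coe_inter, Finset.coe_image] at this
end

section
/- Let X be a geodesic metric space, let n ≥ 1 and λ > 0, and let x, y be nonempty subsets of X each with at most n elements. Suppose there is a relation R ⊆ x × y such that: every a ∈ x has some b ∈ y with (a,b) ∈ R and every b ∈ y has some a ∈ x with (a,b) ∈ R (completeness); R has at most n elements; and dist(a, b) ≤ λ·d_H(x, y) for all (a,b) ∈ R. Then there exists a path γ : [0,1] → X(n), i.e., each γ(t) is a nonempty subset of X with at most n elements, with γ(0) = x, γ(1) = y, and d_H(γ(s), γ(t)) ≤ λ·|s − t|·d_H(x, y) for all s, t ∈ [0,1]. -/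
/-- Sufficient condition for quasigeodesics in `X(n)`: if `x, y ∈ X(n)` over a
geodesic space `X` admit a complete relation `R ⊆ x × y` with at most `n` elements
all of whose pairs are at distance at most `λ · d_H(x,y)`, then `x` and `y` are
joined by a `λ`-quasigeodesic in `X(n)`. -/
theorem stmt_16 {X : Type*} [MetricSpace X]
    (hgeo : ∀ a b : X, ∃ η : ℝ → X, η 0 = a ∧ η 1 = b ∧
      ∀ s ∈ Set.Icc (0 : ℝ) 1, ∀ t ∈ Set.Icc (0 : ℝ) 1,
        dist (η s) (η t) = |s - t| * dist a b)
    (n : ℕ) (hn : 1 ≤ n) (l : ℝ) (hl : 0 < l)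
    (x y : Set X) (hxne : x.Nonempty) (hxcard : x.encard ≤ n)
    (hyne : y.Nonempty) (hycard : y.encard ≤ n)
    (R : Set (X × X)) (hRsub : R ⊆ x ×ˢ y)
    (hcompl : ∀ a ∈ x, ∃ b ∈ y, (a, b) ∈ R)
    (hcompr : ∀ b ∈ y, ∃ a ∈ x, (a, b) ∈ R)
    (hRcard : R.encard ≤ n)
    (hRprox : ∀ p ∈ R, dist p.1 p.2 ≤ l * Metric.hausdorffDist x y) :
    ∃ γ : ℝ → Set X, γ 0 = x ∧ γ 1 = y ∧
      (∀ t ∈ Set.Icc (0 : ℝ) 1, (γ t).Nonempty ∧ (γ t).encard ≤ n) ∧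
      (∀ s ∈ Set.Icc (0 : ℝ) 1, ∀ t ∈ Set.Icc (0 : ℝ) 1,
        Metric.hausdorffDist (γ s) (γ t) ≤ l * |s - t| * Metric.hausdorffDist x y) := by
  choose η h0 h1 hd using fun p : X × X => hgeo p.1 p.2
  refine ⟨fun t => (fun p => η p t) '' R, ?_, ?_, ?_, ?_⟩
  · ext a
    simp only [Set.mem_image]
    constructor
    · rintro ⟨p, hp, rfl⟩
      rw [h0]
      exact (hRsub hp).1
    · intro ha
      obtain ⟨b, _, hab⟩ := hcompl a ha
      exact ⟨(a, b), hab, h0 _⟩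
  · ext b
    simp only [Set.mem_image]
    constructor
    · rintro ⟨p, hp, rfl⟩
      rw [h1]
      exact (hRsub hp).2
    · intro hb
      obtain ⟨a, _, hab⟩ := hcompr b hb
      exact ⟨(a, b), hab, h1 _⟩
  · intro t _
    obtain ⟨a, ha⟩ := hxne
    obtain ⟨b, _, hab⟩ := hcompl a ha
    exact ⟨⟨η (a, b) t, ⟨(a, b), hab, rfl⟩⟩, le_trans (Set.encard_image_le _ _) hRcard⟩
  · intro s hs t ht
    have hr : 0 ≤ l * |s - t| * Metric.hausdorffDist x y :=
      mul_nonneg (mul_nonneg hl.le (abs_nonneg _)) Metric.hausdorffDist_nonneg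
    have key : ∀ p ∈ R, dist (η p s) (η p t) ≤ l * |s - t| * Metric.hausdorffDist x y := by
      intro p hp
      rw [hd p s hs t ht]
      calc |s - t| * dist p.1 p.2 ≤ |s - t| * (l * Metric.hausdorffDist x y) :=
            mul_le_mul_of_nonneg_left (hRprox p hp) (abs_nonneg _)
        _ = l * |s - t| * Metric.hausdorffDist x y := by ring
    apply Metric.hausdorffDist_le_of_mem_dist hr
    · rintro a ⟨p, hp, rfl⟩
      exact ⟨η p t, ⟨p, hp, rfl⟩, key p hp⟩
    · rintro b ⟨p, hp, rfl⟩
      exact ⟨η p s, ⟨p, hp, rfl⟩, (dist_comm (η p s) (η p t) ▸ key p hp)⟩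
end

section
/- Let X be a geodesic metric space and let x, y be nonempty finite subsets of X. Set N := max(|x|, |y|, |x| + |y| − 2). Then there exists a path γ : [0,1] → X(N), i.e., each γ(t) is a nonempty subset of X with at most N elements, with γ(0) = x, γ(1) = y, and d_H(γ(s), γ(t)) = |s − t|·d_H(x, y) for all s, t ∈ [0,1] (a geodesic in X(N)). In particular, any two nonempty subsets with at most n elements are connected by a geodesic in X(max(n, 2n−2)). -/
open Metric Set

lemma exists_rel {X : Type*} [MetricSpace X]
    (x y : Set X) (hxfin : x.Finite) (hyfin : y.Finite)
    (hxne : x.Nonempty) (hyne : y.Nonempty) :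
    ∃ R : Set (X × X), R.Finite ∧ R.Nonempty ∧
      (∀ p ∈ R, p.1 ∈ x ∧ p.2 ∈ y ∧ dist p.1 p.2 ≤ hausdorffDist x y) ∧
      (∀ a ∈ x, ∃ b, (a, b) ∈ R) ∧ (∀ b ∈ y, ∃ a, (a, b) ∈ R) ∧
      R.ncard ≤ max x.ncard (max y.ncard (x.ncard + y.ncard - 2)) := by
  have hne : EMetric.hausdorffEdist x y ≠ ⊤ :=
    hausdorffEdist_ne_top_of_nonempty_of_bounded hxne hyne hxfin.isBounded hyfin.isBounded
  set D := hausdorffDist x y with hD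
  have hfx : ∀ a ∈ x, ∃ b ∈ y, dist a b ≤ D := by
    intro a ha
    obtain ⟨b, hb, hab⟩ := hyfin.isCompact.exists_infDist_eq_dist hyne a
    exact ⟨b, hb, hab ▸ infDist_le_hausdorffDist_of_mem ha hne⟩
  have hgy : ∀ b ∈ y, ∃ a ∈ x, dist a b ≤ D := by
    intro b hb
    obtain ⟨a, ha, hba⟩ := hxfin.isCompact.exists_infDist_eq_dist hxne b
    refine ⟨a, ha, ?_⟩
    rw [dist_comm, ← hba]
    calc infDist b x ≤ hausdorffDist y x :=
          infDist_le_hausdorffDist_of_mem hb (by rwa [EMetric.hausdorffEdist_comm])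
      _ = D := hausdorffDist_comm
  rcases hxne.exists_eq_singleton_or_nontrivial with ⟨a0, rfl⟩ | hxnt
  · refine ⟨{a0} ×ˢ y, (Set.finite_singleton a0).prod hyfin, ⟨(a0, hyne.choose), by
      simp [hyne.choose_spec]⟩, ?_, ?_, ?_, ?_⟩
    · rintro ⟨a, b⟩ ⟨ha, hb⟩
      simp only [mem_singleton_iff] at ha
      subst ha
      obtain ⟨a', ha', hd⟩ := hgy b hb
      simp only [mem_singleton_iff] at ha'
      exact ⟨rfl, hb, by rwa [ha'] at hd⟩
    · intro a ha
      simp only [mem_singleton_iff] at ha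
      exact ⟨hyne.choose, by simp [ha, hyne.choose_spec]⟩
    · intro b hb; exact ⟨a0, by simp [hb]⟩
    · rw [Set.singleton_prod, Set.ncard_image_of_injective _ (fun b b' h => by
        simpa using h)]
      exact le_max_of_le_right (le_max_left _ _)
  rcases hyne.exists_eq_singleton_or_nontrivial with ⟨b0, rfl⟩ | hynt
  · refine ⟨x ×ˢ {b0}, hxfin.prod (Set.finite_singleton b0), ⟨(hxne.choose, b0), by
      simp [hxne.choose_spec]⟩, ?_, ?_, ?_, ?_⟩
    · rintro ⟨a, b⟩ ⟨ha, hb⟩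
      simp only [mem_singleton_iff] at hb
      subst hb
      obtain ⟨b', hb', hd⟩ := hfx a ha
      simp only [mem_singleton_iff] at hb'
      exact ⟨ha, rfl, by rwa [hb'] at hd⟩
    · intro a ha; exact ⟨b0, by simp [ha]⟩
    · intro b hb
      simp only [mem_singleton_iff] at hb
      exact ⟨hxne.choose, by simp [hb, hxne.choose_spec]⟩
    · rw [Set.prod_singleton, Set.ncard_image_of_injective _ (fun a a' h => by
        simpa using h)]
      exact le_max_left _ _
  -- both nontrivial: choose nearest-point maps
  classical
  choose f hfy hfd using hfx
  choose g hgx hgd using hgy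
  -- find a "matching": a1 ≠ a2 in x, b1 ≠ b2 in y with dist a1 b1 ≤ D, dist a2 b2 ≤ D
  have hmatch : ∃ a1 a2 b1 b2, a1 ∈ x ∧ a2 ∈ x ∧ b1 ∈ y ∧ b2 ∈ y ∧ a1 ≠ a2 ∧ b1 ≠ b2 ∧
      dist a1 b1 ≤ D ∧ dist a2 b2 ≤ D := by
    by_cases hf : ∃ a1, ∃ (h1 : a1 ∈ x), ∃ a2, ∃ (h2 : a2 ∈ x), f a1 h1 ≠ f a2 h2
    · obtain ⟨a1, h1, a2, h2, hne12⟩ := hf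
      exact ⟨a1, a2, f a1 h1, f a2 h2, h1, h2, hfy _ _, hfy _ _,
        fun h => hne12 (by subst h; rfl), hne12, hfd _ _, hfd _ _⟩
    by_cases hg : ∃ b1, ∃ (h1 : b1 ∈ y), ∃ b2, ∃ (h2 : b2 ∈ y), g b1 h1 ≠ g b2 h2
    · obtain ⟨b1, h1, b2, h2, hne12⟩ := hg
      exact ⟨g b1 h1, g b2 h2, b1, b2, hgx _ _, hgx _ _, h1, h2, hne12,
        fun h => hne12 (by subst h; rfl), hgd _ _, hgd _ _⟩
    push_neg at hf hg
    -- f constant ≡ b0, g constant ≡ a0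
    obtain ⟨b1, hb1, b2, hb2, hbne⟩ := hynt
    obtain ⟨a1, ha1, a2, ha2, hane⟩ := hxnt
    set a0 := g b1 hb1 with ha0
    set b0 := f a1 ha1 with hb0
    -- pick a ∈ x with a ≠ a0 and b ∈ y with b ≠ b0
    obtain ⟨a, ha, hana⟩ : ∃ a ∈ x, a ≠ a0 := by
      rcases eq_or_ne a1 a0 with h | h
      · exact ⟨a2, ha2, h ▸ hane.symm⟩
      · exact ⟨a1, ha1, h⟩
    obtain ⟨b, hb, hbnb⟩ : ∃ b ∈ y, b ≠ b0 := by
      rcases eq_or_ne b1 b0 with h | h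
      · exact ⟨b2, hb2, h ▸ hbne.symm⟩
      · exact ⟨b1, hb1, h⟩
    refine ⟨a, a0, f a ha, b, ha, hgx _ _, hfy _ _, hb, hana, ?_, hfd _ _, ?_⟩
    · rw [hf a ha a1 ha1, ← hb0]; exact hbnb.symm
    · have := hg b hb b1 hb1
      rw [← ha0] at this
      rw [← this]
      exact hgd _ _
  obtain ⟨a1, a2, b1, b2, ha1, ha2, hb1, hb2, hane, hbne, hd1, hd2⟩ := hmatch
  have hx2 : 2 ≤ x.ncard := Set.one_lt_ncard_iff hxfin |>.mpr ⟨a1, a2, ha1, ha2, hane⟩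
  have hy2 : 2 ≤ y.ncard := Set.one_lt_ncard_iff hyfin |>.mpr ⟨b1, b2, hb1, hb2, hbne⟩
  set R : Set (X × X) :=
    {(a1, b1), (a2, b2)} ∪
    (fun a => if h : a ∈ x then (a, f a h) else (a, b1)) '' (x \ {a1, a2}) ∪
    (fun b => if h : b ∈ y then (g b h, b) else (a1, b)) '' (y \ {b1, b2}) with hR
  have hRfin : R.Finite := by
    refine (Set.Finite.union (Set.Finite.union (by simp) ?_) ?_)
    · exact (hxfin.diff).image _
    · exact (hyfin.diff).image _
  refine ⟨R, hRfin, ⟨(a1, b1), by simp [hR]⟩, ?_, ?_, ?_, ?_⟩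
  · rintro ⟨a, b⟩ hp
    simp only [hR, Set.mem_union, Set.mem_insert_iff, Set.mem_singleton_iff,
      Set.mem_image, Set.mem_diff] at hp
    rcases hp with ((h | h) | ⟨a', ⟨ha', _⟩, h⟩) | ⟨b', ⟨hb', _⟩, h⟩
    · obtain ⟨rfl, rfl⟩ := Prod.mk.injEq .. ▸ h
      exact ⟨ha1, hb1, hd1⟩
    · obtain ⟨rfl, rfl⟩ := Prod.mk.injEq .. ▸ h
      exact ⟨ha2, hb2, hd2⟩
    · rw [dif_pos ha'] at h
      obtain ⟨rfl, rfl⟩ := Prod.mk.injEq .. ▸ h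
      exact ⟨ha', hfy _ _, hfd _ _⟩
    · rw [dif_pos hb'] at h
      obtain ⟨rfl, rfl⟩ := Prod.mk.injEq .. ▸ h
      exact ⟨hgx _ _, hb', hgd _ _⟩
  · intro a ha
    by_cases h : a = a1 ∨ a = a2
    · rcases h with rfl | rfl
      · exact ⟨b1, by simp [hR]⟩
      · exact ⟨b2, by simp [hR]⟩
    · push_neg at h
      refine ⟨f a ha, Or.inl (Or.inr ⟨a, ⟨ha, by simp [h.1, h.2]⟩, by simp [ha]⟩)⟩
  · intro b hb
    by_cases h : b = b1 ∨ b = b2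
    · rcases h with rfl | rfl
      · exact ⟨a1, by simp [hR]⟩
      · exact ⟨a2, by simp [hR]⟩
    · push_neg at h
      refine ⟨g b hb, Or.inr ⟨b, ⟨hb, by simp [h.1, h.2]⟩, by simp [hb]⟩⟩
  · have h1 : ({(a1, b1), (a2, b2)} : Set (X × X)).ncard ≤ 2 :=
      (Set.ncard_insert_le _ _).trans (by simp)
    have h2 : ((fun a => if h : a ∈ x then (a, f a h) else (a, b1)) '' (x \ {a1, a2})).ncard
        ≤ x.ncard - 2 := by
      refine (Set.ncard_image_le ((hxfin.diff))).trans ?_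
      rw [Set.ncard_diff (by simp [Set.insert_subset_iff, ha1, ha2]) (Set.toFinite _)]
      have : ({a1, a2} : Set X).ncard = 2 := Set.ncard_pair hane
      omega
    have h3 : ((fun b => if h : b ∈ y then (g b h, b) else (a1, b)) '' (y \ {b1, b2})).ncard
        ≤ y.ncard - 2 := by
      refine (Set.ncard_image_le ((hyfin.diff))).trans ?_
      rw [Set.ncard_diff (by simp [Set.insert_subset_iff, hb1, hb2]) (Set.toFinite _)]
      have : ({b1, b2} : Set X).ncard = 2 := Set.ncard_pair hbne
      omega
    have := Set.ncard_union_le ({(a1, b1), (a2, b2)} ∪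
      (fun a => if h : a ∈ x then (a, f a h) else (a, b1)) '' (x \ {a1, a2}))
      ((fun b => if h : b ∈ y then (g b h, b) else (a1, b)) '' (y \ {b1, b2}))
    have h4 := Set.ncard_union_le ({(a1, b1), (a2, b2)} : Set (X × X))
      ((fun a => if h : a ∈ x then (a, f a h) else (a, b1)) '' (x \ {a1, a2}))
    rw [hR]
    have hle : R.ncard ≤ x.ncard + y.ncard - 2 := by rw [hR] at *; omega
    omega

/-- Geodesics via proximal reduced complete relations: in a geodesic space `X`, any
two nonempty finite subsets `x, y` are joined by a geodesic in `X(N)`, where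
`N = max (|x|, |y|, |x| + |y| - 2)`. -/
theorem stmt_17 {X : Type*} [MetricSpace X]
    (hgeo : ∀ a b : X, ∃ η : ℝ → X, η 0 = a ∧ η 1 = b ∧
      ∀ s ∈ Set.Icc (0 : ℝ) 1, ∀ t ∈ Set.Icc (0 : ℝ) 1,
        dist (η s) (η t) = |s - t| * dist a b)
    (x y : Set X) (hxfin : x.Finite) (hyfin : y.Finite)
    (hxne : x.Nonempty) (hyne : y.Nonempty) :
    ∃ γ : ℝ → Set X, γ 0 = x ∧ γ 1 = y ∧
      (∀ t ∈ Set.Icc (0 : ℝ) 1, (γ t).Nonempty ∧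
        (γ t).encard ≤ max x.ncard (max y.ncard (x.ncard + y.ncard - 2))) ∧
      (∀ s ∈ Set.Icc (0 : ℝ) 1, ∀ t ∈ Set.Icc (0 : ℝ) 1,
        Metric.hausdorffDist (γ s) (γ t) = |s - t| * Metric.hausdorffDist x y) := by
  classical
  obtain ⟨R, hRfin, hRne, hRmem, hcovx, hcovy, hRcard⟩ :=
    exists_rel x y hxfin hyfin hxne hyne
  set D := Metric.hausdorffDist x y with hD
  have hD0 : 0 ≤ D := Metric.hausdorffDist_nonneg
  choose η hη0 hη1 hηd using fun p : X × X => hgeo p.1 p.2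
  set γ : ℝ → Set X := fun t => (fun p => η p t) '' R with hγ
  have hγ0 : γ 0 = x := by
    apply Set.Subset.antisymm
    · rintro _ ⟨p, hp, rfl⟩
      simpa [hη0] using (hRmem p hp).1
    · intro a ha
      obtain ⟨b, hb⟩ := hcovx a ha
      exact ⟨(a, b), hb, hη0 _⟩
  have hγ1 : γ 1 = y := by
    apply Set.Subset.antisymm
    · rintro _ ⟨p, hp, rfl⟩
      simpa [hη1] using (hRmem p hp).2.1
    · intro b hb
      obtain ⟨a, ha⟩ := hcovy b hb
      exact ⟨(a, b), ha, hη1 _⟩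
  have hγne : ∀ t, (γ t).Nonempty := fun t => hRne.image _
  have hγfin : ∀ t, (γ t).Finite := fun t => hRfin.image _
  have hub : ∀ s ∈ Set.Icc (0 : ℝ) 1, ∀ t ∈ Set.Icc (0 : ℝ) 1,
      Metric.hausdorffDist (γ s) (γ t) ≤ |s - t| * D := by
    intro s hs t ht
    apply Metric.hausdorffDist_le_of_mem_dist (by positivity)
    · rintro _ ⟨p, hp, rfl⟩
      refine ⟨η p t, ⟨p, hp, rfl⟩, ?_⟩
      show dist (η p s) (η p t) ≤ _
      rw [hηd p s hs t ht]
      exact mul_le_mul_of_nonneg_left (hRmem p hp).2.2 (abs_nonneg _)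
    · rintro _ ⟨p, hp, rfl⟩
      refine ⟨η p s, ⟨p, hp, rfl⟩, ?_⟩
      show dist (η p t) (η p s) ≤ _
      rw [hηd p t ht s hs]
      calc |t - s| * dist p.1 p.2 ≤ |t - s| * D :=
            mul_le_mul_of_nonneg_left (hRmem p hp).2.2 (abs_nonneg _)
        _ = |s - t| * D := by rw [abs_sub_comm]
  have hnetop : ∀ s t : ℝ, EMetric.hausdorffEdist (γ s) (γ t) ≠ ⊤ := fun s t =>
    Metric.hausdorffEdist_ne_top_of_nonempty_of_bounded (hγne s) (hγne t)
      (hγfin s).isBounded (hγfin t).isBounded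
  have hlb : ∀ s ∈ Set.Icc (0 : ℝ) 1, ∀ t ∈ Set.Icc (0 : ℝ) 1, s ≤ t →
      (t - s) * D ≤ Metric.hausdorffDist (γ s) (γ t) := by
    intro s hs t ht hst
    have h01 : D = Metric.hausdorffDist (γ 0) (γ 1) := by rw [hγ0, hγ1]
    have t1 : Metric.hausdorffDist (γ 0) (γ 1) ≤
        Metric.hausdorffDist (γ 0) (γ s) + Metric.hausdorffDist (γ s) (γ 1) :=
      Metric.hausdorffDist_triangle (hnetop 0 s)
    have t2 : Metric.hausdorffDist (γ s) (γ 1) ≤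
        Metric.hausdorffDist (γ s) (γ t) + Metric.hausdorffDist (γ t) (γ 1) :=
      Metric.hausdorffDist_triangle (hnetop s t)
    have u1 : Metric.hausdorffDist (γ 0) (γ s) ≤ s * D := by
      have := hub 0 (by norm_num) s hs
      rwa [show |0 - s| = s by rw [abs_sub_comm]; simpa using abs_of_nonneg hs.1] at this
    have u2 : Metric.hausdorffDist (γ t) (γ 1) ≤ (1 - t) * D := by
      have := hub t ht 1 (by norm_num)
      rwa [show |t - 1| = 1 - t by rw [abs_sub_comm]; exact abs_of_nonneg (by linarith [ht.2])]
        at this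
    nlinarith [h01, t1, t2, u1, u2]
  refine ⟨γ, hγ0, hγ1, ?_, ?_⟩
  · intro t ht
    refine ⟨hγne t, ?_⟩
    calc (γ t).encard ≤ R.encard := Set.encard_image_le _ _
      _ = (R.ncard : ℕ∞) := by
          rw [Set.Finite.encard_eq_coe_toFinset_card hRfin, Set.ncard_eq_toFinset_card _ hRfin]
      _ ≤ _ := by exact_mod_cast hRcard
  · intro s hs t ht
    rcases le_total s t with hst | hst
    · have := hlb s hs t ht hst
      have h2 := hub s hs t ht
      have : Metric.hausdorffDist (γ s) (γ t) = (t - s) * D := le_antisymm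
        (by rwa [show |s - t| = t - s by rw [abs_sub_comm]; exact abs_of_nonneg (by linarith)]
          at h2) this
      rw [this, show |s - t| = t - s by rw [abs_sub_comm]; exact abs_of_nonneg (by linarith)]
    · have := hlb t ht s hs hst
      have h2 := hub t ht s hs
      have heq : Metric.hausdorffDist (γ t) (γ s) = (s - t) * D := le_antisymm
        (by rwa [show |t - s| = s - t by rw [abs_sub_comm]; exact abs_of_nonneg (by linarith)]
          at h2) this
      rw [Metric.hausdorffDist_comm, heq,
        show |s - t| = s - t from abs_of_nonneg (by linarith)]
end

section
/- Let X be a geodesic metric space and n ≥ 1. Then the finite subset space X(n) is 2-quasiconvex: for all nonempty subsets x, y of X each with at most n elements, there exists a path γ : [0,1] → X(n), i.e., each γ(t) is a nonempty subset of X with at most n elements, such that γ(0) = x, γ(1) = y, and d_H(γ(s), γ(t)) ≤ 2·|s − t|·d_H(x, y) for all s, t ∈ [0,1]. -/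
private lemma comb {α : Type*} [DecidableEq α] (xs ys : Set α) :
    ∀ F : Finset (α × α),
    (∀ p ∈ F, p.1 ∈ xs ∧ p.2 ∈ ys) →
    (∀ a ∈ xs, ∃ b, (a, b) ∈ F) →
    (∀ b ∈ ys, ∃ a, (a, b) ∈ F) →
    ∃ μ σ : α → α,
      (∀ a ∈ xs, μ a = a ∨ (a, μ a) ∈ F) ∧
      (∀ b ∈ ys, σ b = b ∨ (σ b, b) ∈ F) ∧
      μ '' xs = σ '' ys := by
  intro F
  induction F using Finset.strongInductionOn with
  | _ F ih =>
    intro hsub hcx hcy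
    by_cases hstar : ∀ p ∈ F, (∀ b b', (p.1, b) ∈ F → (p.1, b') ∈ F → b = b') ∨
        (∀ a a', (a, p.2) ∈ F → (a', p.2) ∈ F → a = a')
    · -- star case
      set Ux : α → Prop := fun a => ∀ b b', (a, b) ∈ F → (a, b') ∈ F → b = b' with hUxdef
      set Uy : α → Prop := fun b => ∀ a a', (a, b) ∈ F → (a', b) ∈ F → a = a' with hUydef
      have hstar' : ∀ a b, (a, b) ∈ F → Ux a ∨ Uy b := fun a b h => hstar (a, b) h
      set Pm : α → Prop := fun a => ∃ b, (a, b) ∈ F ∧ ¬ Uy b ∧ Ux a with hPmdef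
      set Ps : α → Prop := fun b => ∃ a, (a, b) ∈ F ∧ ¬(¬ Uy b ∧ Ux a) with hPsdef
      classical
      refine ⟨fun a => if h : Pm a then h.choose else a,
              fun b => if h : Ps b then h.choose else b, ?_, ?_, ?_⟩
      · intro a ha
        by_cases h : Pm a
        · right; simp only [dif_pos h]; exact h.choose_spec.1
        · left; simp only [dif_neg h]
      · intro b hb
        by_cases h : Ps b
        · right; simp only [dif_pos h]; exact h.choose_spec.1
        · left; simp only [dif_neg h]
      · apply Set.Subset.antisymm
        · rintro z ⟨a, ha, rfl⟩
          by_cases h : Pm a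
          · simp only [dif_pos h]
            set b₀ := h.choose with hb₀
            obtain ⟨hF₀, hnUy₀, hUxa⟩ := h.choose_spec
            have hnPs : ¬ Ps b₀ := by
              rintro ⟨a', hF', hn⟩
              have : Ux a' := (hstar' a' b₀ hF').resolve_right hnUy₀
              exact hn ⟨hnUy₀, this⟩
            exact ⟨b₀, (hsub _ hF₀).2, by simp only [dif_neg hnPs]⟩
          · simp only [dif_neg h]
            obtain ⟨b₁, hb₁⟩ := hcx a ha
            by_cases hUyb : Uy b₁
            · have hPs : Ps b₁ := ⟨a, hb₁, fun hc => hc.1 hUyb⟩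
              refine ⟨b₁, (hsub _ hb₁).2, ?_⟩
              simp only [dif_pos hPs]
              exact hUyb _ _ hPs.choose_spec.1 hb₁
            · have hUxa : Ux a := (hstar' a b₁ hb₁).resolve_right hUyb
              exact absurd ⟨b₁, hb₁, hUyb, hUxa⟩ h
        · rintro z ⟨b, hb, rfl⟩
          by_cases h : Ps b
          · simp only [dif_pos h]
            set a₀ := h.choose with ha₀
            obtain ⟨hF₀, hn⟩ := h.choose_spec
            have hnPm : ¬ Pm a₀ := by
              rintro ⟨b', hF', hnUy', hUx⟩
              exact hn ⟨by rwa [hUx _ _ hF' hF₀] at hnUy', hUx⟩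
            exact ⟨a₀, (hsub _ hF₀).1, by simp only [dif_neg hnPm]⟩
          · simp only [dif_neg h]
            obtain ⟨a₁, ha₁⟩ := hcy b hb
            have hkey : ¬ Uy b ∧ Ux a₁ := by
              by_contra hc
              exact h ⟨a₁, ha₁, hc⟩
            have hPm : Pm a₁ := ⟨b, ha₁, hkey.1, hkey.2⟩
            refine ⟨a₁, (hsub _ ha₁).1, ?_⟩
            simp only [dif_pos hPm]
            exact hkey.2 _ _ hPm.choose_spec.1 ha₁
    · push_neg at hstar
      obtain ⟨⟨a, b⟩, hpF, ⟨b₁, b₂, hb₁, hb₂, hbne⟩, ⟨a₁, a₂, ha₁, ha₂, hane⟩⟩ := hstar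
      -- get a neighbor of a different from b
      have hbx : ∃ c, c ≠ b ∧ (a, c) ∈ F := by
        by_cases h : b₁ = b
        · exact ⟨b₂, fun hc => hbne (h.trans hc.symm), hb₂⟩
        · exact ⟨b₁, h, hb₁⟩
      have hby : ∃ c, c ≠ a ∧ (c, b) ∈ F := by
        by_cases h : a₁ = a
        · exact ⟨a₂, fun hc => hane (h.trans hc.symm), ha₂⟩
        · exact ⟨a₁, h, ha₁⟩
      obtain ⟨c₁, hc₁ne, hc₁⟩ := hbx
      obtain ⟨c₂, hc₂ne, hc₂⟩ := hby
      have hss : F.erase (a, b) ⊂ F := Finset.erase_ssubset hpF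
      obtain ⟨μ, σ, h1, h2, h3⟩ := ih _ hss
        (fun p hp => hsub p (Finset.mem_of_mem_erase hp))
        (fun a' ha' => by
          obtain ⟨b', hb'⟩ := hcx a' ha'
          by_cases hpe : (a', b') = (a, b)
          · obtain ⟨rfl, rfl⟩ : a' = a ∧ b' = b := Prod.ext_iff.mp hpe
            exact ⟨c₁, Finset.mem_erase.mpr ⟨by simp [hc₁ne], hc₁⟩⟩
          · exact ⟨b', Finset.mem_erase.mpr ⟨hpe, hb'⟩⟩)
        (fun b' hb' => by
          obtain ⟨a', ha'⟩ := hcy b' hb'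
          by_cases hpe : (a', b') = (a, b)
          · obtain ⟨rfl, rfl⟩ : a' = a ∧ b' = b := Prod.ext_iff.mp hpe
            exact ⟨c₂, Finset.mem_erase.mpr ⟨by simp [hc₂ne], hc₂⟩⟩
          · exact ⟨a', Finset.mem_erase.mpr ⟨hpe, ha'⟩⟩)
      exact ⟨μ, σ, fun a' ha' => (h1 a' ha').imp_right (Finset.mem_of_mem_erase),
        fun b' hb' => (h2 b' hb').imp_right (Finset.mem_of_mem_erase), h3⟩

private lemma hDist_image_le {X : Type*} [MetricSpace X] {s : Set X} (hs : s.Nonempty)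
    {f g : X → X} {r : ℝ}
    (hr : 0 ≤ r) (h : ∀ a ∈ s, dist (f a) (g a) ≤ r) :
    Metric.hausdorffDist (f '' s) (g '' s) ≤ r := by
  apply Metric.hausdorffDist_le_of_mem_dist hr
  · rintro z ⟨a, ha, rfl⟩; exact ⟨g a, Set.mem_image_of_mem _ ha, h a ha⟩
  · rintro z ⟨a, ha, rfl⟩
    exact ⟨f a, Set.mem_image_of_mem _ ha, by rw [dist_comm]; exact h a ha⟩

/-- Quasiconvexity of `X(n)`: if `X` is a geodesic space, then any two nonempty
subsets of `X` with at most `n` elements are joined by a `2`-quasigeodesic in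
`X(n)`. -/
theorem stmt_18 {X : Type*} [MetricSpace X]
    (hgeo : ∀ a b : X, ∃ η : ℝ → X, η 0 = a ∧ η 1 = b ∧
      ∀ s ∈ Set.Icc (0 : ℝ) 1, ∀ t ∈ Set.Icc (0 : ℝ) 1,
        dist (η s) (η t) = |s - t| * dist a b)
    (n : ℕ) (hn : 1 ≤ n)
    (x y : Set X) (hxne : x.Nonempty) (hxcard : x.encard ≤ n)
    (hyne : y.Nonempty) (hycard : y.encard ≤ n) :
    ∃ γ : ℝ → Set X, γ 0 = x ∧ γ 1 = y ∧
      (∀ t ∈ Set.Icc (0 : ℝ) 1, (γ t).Nonempty ∧ (γ t).encard ≤ n) ∧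
      (∀ s ∈ Set.Icc (0 : ℝ) 1, ∀ t ∈ Set.Icc (0 : ℝ) 1,
        Metric.hausdorffDist (γ s) (γ t) ≤ 2 * |s - t| * Metric.hausdorffDist x y) := by
  classical
  set H := Metric.hausdorffDist x y with hHdef
  have hH0 : 0 ≤ H := Metric.hausdorffDist_nonneg
  have hxfin : x.Finite := by
    rw [← Set.encard_lt_top_iff]; exact hxcard.trans_lt (WithTop.coe_lt_top _)
  have hyfin : y.Finite := by
    rw [← Set.encard_lt_top_iff]; exact hycard.trans_lt (WithTop.coe_lt_top _)
  have hedist : EMetric.hausdorffEdist x y ≠ ⊤ :=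
    Metric.hausdorffEdist_ne_top_of_nonempty_of_bounded hxne hyne
      hxfin.isBounded hyfin.isBounded
  have hfx : ∀ a ∈ x, ∃ b ∈ y, dist a b ≤ H := by
    intro a ha
    obtain ⟨b, hb, hbd⟩ := hyfin.isCompact.exists_infDist_eq_dist hyne a
    exact ⟨b, hb, hbd ▸ Metric.infDist_le_hausdorffDist_of_mem ha hedist⟩
  have hfy : ∀ b ∈ y, ∃ a ∈ x, dist a b ≤ H := by
    intro b hb
    obtain ⟨a, ha, had⟩ := hxfin.isCompact.exists_infDist_eq_dist hxne b
    refine ⟨a, ha, ?_⟩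
    rw [dist_comm, ← had, hHdef, Metric.hausdorffDist_comm]
    exact Metric.infDist_le_hausdorffDist_of_mem hb
      (by rwa [EMetric.hausdorffEdist_comm])
  have hFsetfin : {p : X × X | p.1 ∈ x ∧ p.2 ∈ y ∧ dist p.1 p.2 ≤ H}.Finite :=
    (hxfin.prod hyfin).subset (fun p hp => ⟨hp.1, hp.2.1⟩)
  set F := hFsetfin.toFinset with hFdef
  have hmemF : ∀ p : X × X, p ∈ F ↔ p.1 ∈ x ∧ p.2 ∈ y ∧ dist p.1 p.2 ≤ H := by
    intro p; rw [hFdef, Set.Finite.mem_toFinset]; rfl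
  obtain ⟨μ, σ, hμ, hσ, him⟩ := comb x y F
    (fun p hp => ⟨((hmemF p).mp hp).1, ((hmemF p).mp hp).2.1⟩)
    (fun a ha => by
      obtain ⟨b, hb, hd⟩ := hfx a ha
      exact ⟨b, (hmemF (a, b)).mpr ⟨ha, hb, hd⟩⟩)
    (fun b hb => by
      obtain ⟨a, ha, hd⟩ := hfy b hb
      exact ⟨a, (hmemF (a, b)).mpr ⟨ha, hb, hd⟩⟩)
  have hdμ : ∀ a ∈ x, dist a (μ a) ≤ H := by
    intro a ha
    rcases hμ a ha with h | h
    · rw [h]; simpa using hH0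
    · exact ((hmemF _).mp h).2.2
  have hdσ : ∀ b ∈ y, dist (σ b) b ≤ H := by
    intro b hb
    rcases hσ b hb with h | h
    · rw [h]; simpa using hH0
    · exact ((hmemF _).mp h).2.2
  choose η hη0 hη1 hηd using hgeo
  set f : ℝ → X → X := fun t a => η a (μ a) (2 * t) with hfdef
  set g : ℝ → X → X := fun t b => η (σ b) b (2 * t - 1) with hgdef
  set γ : ℝ → Set X := fun t => if t ≤ 1 / 2 then f t '' x else g t '' y with hγdef
  have hγ0 : γ 0 = x := by
    rw [hγdef]
    simp only [if_pos (by norm_num : (0:ℝ) ≤ 1/2)]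
    have : f 0 '' x = (fun a => a) '' x :=
      Set.image_congr fun a _ => by rw [hfdef]; simp [hη0]
    rw [this, Set.image_id']
  have hγ1 : γ 1 = y := by
    rw [hγdef]
    simp only [if_neg (by norm_num : ¬ (1:ℝ) ≤ 1/2)]
    have : g 1 '' y = (fun b => b) '' y :=
      Set.image_congr fun b _ => by rw [hgdef]; norm_num [hη1]
    rw [this, Set.image_id']
  have hγhalf : γ (1/2) = μ '' x := by
    rw [hγdef]
    simp only [if_pos (le_refl (1/2 : ℝ))]
    exact Set.image_congr fun a _ => by rw [hfdef]; norm_num [hη1]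
  -- finiteness and nonemptiness of γ t
  have hγfin : ∀ t, (γ t).Finite := by
    intro t; rw [hγdef]; beta_reduce
    split_ifs
    · exact hxfin.image _
    · exact hyfin.image _
  have hγne : ∀ t, (γ t).Nonempty := by
    intro t; rw [hγdef]; beta_reduce
    split_ifs
    · exact hxne.image _
    · exact hyne.image _
  have hγcard : ∀ t, (γ t).encard ≤ n := by
    intro t; rw [hγdef]; beta_reduce
    split_ifs
    · exact (Set.encard_image_le _ _).trans hxcard
    · exact (Set.encard_image_le _ _).trans hycard
  have hnetop : ∀ s t : ℝ, EMetric.hausdorffEdist (γ s) (γ t) ≠ ⊤ := fun s t =>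
    Metric.hausdorffEdist_ne_top_of_nonempty_of_bounded (hγne s) (hγne t)
      (hγfin s).isBounded (hγfin t).isBounded
  -- key pointwise bounds
  have bound1 : ∀ s t : ℝ, 0 ≤ s → s ≤ 1/2 → 0 ≤ t → t ≤ 1/2 →
      Metric.hausdorffDist (f s '' x) (f t '' x) ≤ 2 * |s - t| * H := by
    intro s t hs0 hs2 ht0 ht2
    apply hDist_image_le hxne (by positivity)
    intro a ha
    rw [hfdef]
    simp only
    rw [hηd a (μ a) (2*s) ⟨by linarith, by linarith⟩ (2*t) ⟨by linarith, by linarith⟩]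
    have habs : |2*s - 2*t| = 2 * |s - t| := by
      rw [show (2*s - 2*t : ℝ) = 2 * (s - t) by ring, abs_mul, abs_two]
    rw [habs]
    exact mul_le_mul_of_nonneg_left (hdμ a ha) (by positivity)
  have bound2 : ∀ s t : ℝ, 1/2 ≤ s → s ≤ 1 → 1/2 ≤ t → t ≤ 1 →
      Metric.hausdorffDist (g s '' y) (g t '' y) ≤ 2 * |s - t| * H := by
    intro s t hs0 hs2 ht0 ht2
    apply hDist_image_le hyne (by positivity)
    intro b hb
    rw [hgdef]
    simp only
    rw [hηd (σ b) b (2*s - 1) ⟨by linarith, by linarith⟩ (2*t - 1) ⟨by linarith, by linarith⟩]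
    have habs : |2*s - 1 - (2*t - 1)| = 2 * |s - t| := by
      rw [show (2*s - 1 - (2*t - 1) : ℝ) = 2 * (s - t) by ring, abs_mul, abs_two]
    rw [habs]
    refine mul_le_mul_of_nonneg_left ?_ (by positivity)
    exact hdσ b hb
  have boundL : ∀ s : ℝ, 0 ≤ s → s ≤ 1/2 →
      Metric.hausdorffDist (f s '' x) (μ '' x) ≤ (1 - 2*s) * H := by
    intro s hs0 hs2
    apply hDist_image_le hxne (by nlinarith)
    intro a ha
    rw [hfdef]
    simp only
    have : μ a = η a (μ a) 1 := (hη1 a (μ a)).symm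
    nth_rewrite 2 [this]
    rw [hηd a (μ a) (2*s) ⟨by linarith, by linarith⟩ 1 ⟨by norm_num, le_refl 1⟩]
    have habs : |2*s - 1| = 1 - 2*s := by rw [abs_of_nonpos (by linarith)]; ring
    rw [habs]
    exact mul_le_mul_of_nonneg_left (hdμ a ha) (by linarith)
  have boundR : ∀ t : ℝ, 1/2 ≤ t → t ≤ 1 →
      Metric.hausdorffDist (σ '' y) (g t '' y) ≤ (2*t - 1) * H := by
    intro t ht0 ht2
    apply hDist_image_le hyne (by nlinarith)
    intro b hb
    rw [hgdef]
    simp only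
    have : σ b = η (σ b) b 0 := (hη0 (σ b) b).symm
    nth_rewrite 1 [this]
    rw [hηd (σ b) b 0 ⟨le_refl 0, by norm_num⟩ (2*t - 1) ⟨by linarith, by linarith⟩]
    have habs : |0 - (2*t - 1)| = 2*t - 1 := by rw [abs_of_nonpos (by linarith)]; ring
    rw [habs]
    refine mul_le_mul_of_nonneg_left ?_ (by linarith)
    exact hdσ b hb
  have main : ∀ s ∈ Set.Icc (0:ℝ) 1, ∀ t ∈ Set.Icc (0:ℝ) 1, s ≤ t →
      Metric.hausdorffDist (γ s) (γ t) ≤ 2 * (t - s) * H := by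
    intro s hs t ht hst
    obtain ⟨hs0, hs1⟩ := hs
    obtain ⟨ht0, ht1⟩ := ht
    by_cases ht2 : t ≤ 1/2
    · have hs2 : s ≤ 1/2 := hst.trans ht2
      rw [hγdef]
      simp only [if_pos hs2, if_pos ht2]
      have := bound1 s t hs0 hs2 ht0 ht2
      rwa [abs_of_nonpos (by linarith), neg_sub] at this
    · push_neg at ht2
      by_cases hs2 : s ≤ 1/2
      · -- mixed case
        have h1 : Metric.hausdorffDist (γ s) (γ t) ≤
            Metric.hausdorffDist (γ s) (μ '' x) + Metric.hausdorffDist (μ '' x) (γ t) := by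
          have := hnetop s (1/2)
          rw [hγhalf] at this
          exact Metric.hausdorffDist_triangle this
        have h2 : Metric.hausdorffDist (γ s) (μ '' x) ≤ (1 - 2*s) * H := by
          rw [hγdef]; simp only [if_pos hs2]; exact boundL s hs0 hs2
        have h3 : Metric.hausdorffDist (μ '' x) (γ t) ≤ (2*t - 1) * H := by
          rw [hγdef]
          simp only [if_neg (not_le.mpr ht2)]
          rw [him]
          exact boundR t ht2.le ht1
        calc Metric.hausdorffDist (γ s) (γ t) ≤ (1 - 2*s) * H + (2*t - 1) * H :=
              h1.trans (add_le_add h2 h3)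
          _ = 2 * (t - s) * H := by ring
      · push_neg at hs2
        rw [hγdef]
        simp only [if_neg (not_le.mpr hs2), if_neg (not_le.mpr ht2)]
        have := bound2 s t hs2.le hs1 ht2.le ht1
        rwa [abs_of_nonpos (by linarith), neg_sub] at this
  refine ⟨γ, hγ0, hγ1, fun t _ => ⟨hγne t, hγcard t⟩, ?_⟩
  intro s hs t ht
  rcases le_total s t with h | h
  · rw [abs_of_nonpos (by linarith), neg_sub]
    exact main s hs t ht h
  · rw [abs_of_nonneg (by linarith), Metric.hausdorffDist_comm]
    exact main t ht s hs h
end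

section
/- Let X be a geodesic metric space containing at least two points and let n ≥ 3. If λ > 0 is such that every two nonempty subsets x, y of X with at most n elements are joined by a λ-quasigeodesic in X(n) — that is, a path γ : [0,1] → X(n) with γ(0) = x, γ(1) = y and d_H(γ(s), γ(t)) ≤ λ·|s − t|·d_H(x, y) for all s, t ∈ [0,1] — then λ ≥ 2. Hence 2 is the smallest quasiconvexity constant of X(n) for n ≥ 3. -/
/-- For a geodesic space `X` with at least two points and `n ≥ 3`, any constant
`λ > 0` such that every pair of points of `X(n)` is joined by a `λ`-quasigeodesic
in `X(n)` satisfies `λ ≥ 2`; i.e., `2` is the smallest quasiconvexity constant of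
`X(n)`. -/
theorem stmt_19 {X : Type*} [MetricSpace X]
    (hgeo : ∀ a b : X, ∃ η : ℝ → X, η 0 = a ∧ η 1 = b ∧
      ∀ s ∈ Set.Icc (0 : ℝ) 1, ∀ t ∈ Set.Icc (0 : ℝ) 1,
        dist (η s) (η t) = |s - t| * dist a b)
    (hX : ∃ a b : X, a ≠ b)
    (n : ℕ) (hn : 3 ≤ n) (l : ℝ) (hl : 0 < l)
    (hquasi : ∀ x y : Set X, x.Nonempty → x.encard ≤ n → y.Nonempty → y.encard ≤ n →
      ∃ γ : ℝ → Set X, γ 0 = x ∧ γ 1 = y ∧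
        (∀ t ∈ Set.Icc (0 : ℝ) 1, (γ t).Nonempty ∧ (γ t).encard ≤ n) ∧
        (∀ s ∈ Set.Icc (0 : ℝ) 1, ∀ t ∈ Set.Icc (0 : ℝ) 1,
          Metric.hausdorffDist (γ s) (γ t) ≤ l * |s - t| * Metric.hausdorffDist x y)) :
    2 ≤ l := by
  classical
  by_contra hcon
  push_neg at hcon
  obtain ⟨a, b, hab⟩ := hX
  obtain ⟨η, hη0, hη1, hη⟩ := hgeo a b
  obtain ⟨m, rfl⟩ : ∃ m, n = m + 3 := ⟨n - 3, by omega⟩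
  have hd : (0:ℝ) < dist a b := dist_pos.2 hab
  set d : ℝ := dist a b with hdd
  set g : ℝ := 1 / (2 * ((m:ℝ) + 3)) with hgdef
  have hg : 0 < g := by positivity
  set u : ℕ → X := fun k => η ((k:ℝ) * g) with hudef
  have hmem : ∀ k : ℕ, k ≤ 2 * m + 6 → (k : ℝ) * g ∈ Set.Icc (0:ℝ) 1 := by
    intro k hk
    constructor
    · positivity
    · rw [hgdef, mul_one_div, div_le_one (by positivity)]
      have : (k : ℝ) ≤ 2 * (m:ℝ) + 6 := by exact_mod_cast hk
      linarith
  have hu : ∀ i j : ℕ, i ≤ 2*m+6 → j ≤ 2*m+6 →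
      dist (u i) (u j) = |(i:ℝ) - j| * (g * d) := by
    intro i j hi hj
    have h := hη _ (hmem i hi) _ (hmem j hj)
    show dist (η ((i:ℝ) * g)) (η ((j:ℝ) * g)) = _
    rw [h, show (i:ℝ)*g - (j:ℝ)*g = ((i:ℝ) - j) * g from by ring, abs_mul,
      abs_of_nonneg hg.le]
    ring
  have hadj : ∀ i j : ℕ, i ≤ 2*m+6 → j ≤ 2*m+6 → (i = j + 1 ∨ j = i + 1) →
      dist (u i) (u j) ≤ g * d := by
    intro i j hi hj hij
    rw [hu i j hi hj]
    have h1 : |(i:ℝ) - j| = 1 := by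
      rcases hij with h | h
      · subst h; push_cast
        rw [show ((j:ℝ) + 1 - j) = 1 from by ring, abs_one]
      · subst h; push_cast
        rw [show ((i:ℝ) - (i + 1)) = -1 from by ring, abs_neg, abs_one]
    rw [h1, one_mul]
  -- index sets
  set Ax : Finset ℕ := ((Finset.range (m+2)).image (fun k => 2*k)) ∪ {2*m+5} with hAx
  set Ay : Finset ℕ := ((Finset.range (m+1)).image (fun k => 2*k+1)) ∪ {2*m+4, 2*m+6} with hAy
  set At : Finset ℕ := ((Finset.range (m+2)).image (fun k => 2*k)) ∪ {2*m+4, 2*m+6} with hAt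
  have hAxmem : ∀ i, i ∈ Ax ↔ ((∃ k, k < m+2 ∧ 2*k = i) ∨ i = 2*m+5) := by
    intro i
    simp [hAx, Finset.mem_union, Finset.mem_image, Finset.mem_range, Finset.mem_singleton]
    exact or_comm
  have hAymem : ∀ i, i ∈ Ay ↔ ((∃ k, k < m+1 ∧ 2*k+1 = i) ∨ i = 2*m+4 ∨ i = 2*m+6) := by
    intro i
    simp only [hAy, Finset.mem_union, Finset.mem_image, Finset.mem_range, Finset.mem_insert,
      Finset.mem_singleton]
  have hAtmem : ∀ i, i ∈ At ↔ ((∃ k, k < m+2 ∧ 2*k = i) ∨ i = 2*m+4 ∨ i = 2*m+6) := by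
    intro i
    simp only [hAt, Finset.mem_union, Finset.mem_image, Finset.mem_range, Finset.mem_insert,
      Finset.mem_singleton]
  have hAxle : ∀ i ∈ Ax, i ≤ 2*m+6 := by
    intro i hi; rcases (hAxmem i).mp hi with ⟨k, hk, rfl⟩ | rfl <;> omega
  have hAyle : ∀ i ∈ Ay, i ≤ 2*m+6 := by
    intro i hi; rcases (hAymem i).mp hi with ⟨k, hk, rfl⟩ | rfl | rfl <;> omega
  have hAtle : ∀ i ∈ At, i ≤ 2*m+6 := by
    intro i hi; rcases (hAtmem i).mp hi with ⟨k, hk, rfl⟩ | rfl | rfl <;> omega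
  have hAxAy : ∀ i ∈ Ax, ∃ j ∈ Ay, (i = j + 1 ∨ j = i + 1) := by
    intro i hi
    rcases (hAxmem i).mp hi with ⟨k, hk, rfl⟩ | rfl
    · rcases Nat.lt_or_ge k (m+1) with h | h
      · exact ⟨2*k+1, (hAymem _).mpr (Or.inl ⟨k, h, rfl⟩), Or.inr rfl⟩
      · have hk1 : k = m+1 := by omega
        subst hk1
        exact ⟨2*m+1, (hAymem _).mpr (Or.inl ⟨m, by omega, rfl⟩), Or.inl (by omega)⟩
    · exact ⟨2*m+4, (hAymem _).mpr (Or.inr (Or.inl rfl)), Or.inl rfl⟩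
  have hAyAx : ∀ j ∈ Ay, ∃ i ∈ Ax, (i = j + 1 ∨ j = i + 1) := by
    intro j hj
    rcases (hAymem j).mp hj with ⟨k, hk, rfl⟩ | rfl | rfl
    · exact ⟨2*k, (hAxmem _).mpr (Or.inl ⟨k, by omega, rfl⟩), Or.inr rfl⟩
    · exact ⟨2*m+5, (hAxmem _).mpr (Or.inr rfl), Or.inl rfl⟩
    · exact ⟨2*m+5, (hAxmem _).mpr (Or.inr rfl), Or.inr rfl⟩
  -- the endpoint sets
  set x : Set X := ↑(Ax.image u) with hxdef
  set y : Set X := ↑(Ay.image u) with hydef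
  have hxne : x.Nonempty := ⟨u (2*m+5), by
    rw [hxdef]
    exact Finset.mem_coe.mpr (Finset.mem_image_of_mem u ((hAxmem _).mpr (Or.inr rfl)))⟩
  have hyne : y.Nonempty := ⟨u (2*m+4), by
    rw [hydef]
    exact Finset.mem_coe.mpr (Finset.mem_image_of_mem u ((hAymem _).mpr (Or.inr (Or.inl rfl))))⟩
  have hxcard : x.encard ≤ ((m+3 : ℕ) : ℕ∞) := by
    rw [hxdef, Set.encard_coe_eq_coe_finsetCard]
    have h1 : (Ax.image u).card ≤ Ax.card := Finset.card_image_le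
    have h2 : Ax.card ≤ (m+2) + 1 := by
      rw [hAx]
      refine (Finset.card_union_le _ _).trans ?_
      gcongr
      · exact (Finset.card_image_le).trans (by simp)
      · simp
    exact_mod_cast h1.trans (h2.trans (by omega))
  have hycard : y.encard ≤ ((m+3 : ℕ) : ℕ∞) := by
    rw [hydef, Set.encard_coe_eq_coe_finsetCard]
    have h1 : (Ay.image u).card ≤ Ay.card := Finset.card_image_le
    have h2 : Ay.card ≤ (m+1) + 2 := by
      rw [hAy]
      refine (Finset.card_union_le _ _).trans ?_
      gcongr
      · exact (Finset.card_image_le).trans (by simp)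
      · exact (Finset.card_insert_le _ _).trans (by simp)
    exact_mod_cast h1.trans (h2.trans (by omega))
  have hxyH : Metric.hausdorffDist x y ≤ g * d := by
    apply Metric.hausdorffDist_le_of_mem_dist (by positivity)
    · intro p hp
      rw [hxdef] at hp
      obtain ⟨i, hi, rfl⟩ := Finset.mem_image.mp (Finset.mem_coe.mp hp)
      obtain ⟨j, hj, hadjij⟩ := hAxAy i hi
      exact ⟨u j, Finset.mem_coe.mpr (Finset.mem_image_of_mem u hj),
        hadj i j (hAxle i hi) (hAyle j hj) hadjij⟩
    · intro q hq
      rw [hydef] at hq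
      obtain ⟨j, hj, rfl⟩ := Finset.mem_image.mp (Finset.mem_coe.mp hq)
      obtain ⟨i, hi, hadjij⟩ := hAyAx j hj
      exact ⟨u i, Finset.mem_coe.mpr (Finset.mem_image_of_mem u hi),
        by rw [dist_comm]; exact hadj i j (hAxle i hi) (hAyle j hj) hadjij⟩
  obtain ⟨γ, hγ0, hγ1, hγmem, hγq⟩ := hquasi x y hxne hxcard hyne hycard
  have h12 : (1/2 : ℝ) ∈ Set.Icc (0:ℝ) 1 := by norm_num
  have h0m : (0 : ℝ) ∈ Set.Icc (0:ℝ) 1 := by norm_num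
  have h1m : (1 : ℝ) ∈ Set.Icc (0:ℝ) 1 := by norm_num
  obtain ⟨hZne, hZcard⟩ := hγmem (1/2) h12
  set Z : Set X := γ (1/2) with hZdef
  have hDnn : 0 ≤ Metric.hausdorffDist x y := Metric.hausdorffDist_nonneg
  have hZx : Metric.hausdorffDist Z x < g * d := by
    have h := hγq (1/2) h12 0 h0m
    rw [hγ0, show |(1/2 : ℝ) - 0| = 1/2 from by norm_num] at h
    have h2 : l * (1/2) * Metric.hausdorffDist x y ≤ l * (1/2) * (g * d) := by
      apply mul_le_mul_of_nonneg_left hxyH (by positivity)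
    nlinarith [mul_pos hg hd]
  have hZy : Metric.hausdorffDist Z y < g * d := by
    have h := hγq (1/2) h12 1 h1m
    rw [hγ1, show |(1/2 : ℝ) - 1| = 1/2 from by norm_num] at h
    have h2 : l * (1/2) * Metric.hausdorffDist x y ≤ l * (1/2) * (g * d) := by
      apply mul_le_mul_of_nonneg_left hxyH (by positivity)
    nlinarith [mul_pos hg hd]
  have hZfin : Z.Finite := Set.finite_of_encard_le_coe hZcard
  have hxfin : x.Finite := by rw [hxdef]; exact (Ax.image u).finite_toSet
  have hyfin : y.Finite := by rw [hydef]; exact (Ay.image u).finite_toSet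
  have hExZ : EMetric.hausdorffEdist x Z ≠ ⊤ :=
    Metric.hausdorffEdist_ne_top_of_nonempty_of_bounded hxne hZne hxfin.isBounded
      hZfin.isBounded
  have hEyZ : EMetric.hausdorffEdist y Z ≠ ⊤ :=
    Metric.hausdorffEdist_ne_top_of_nonempty_of_bounded hyne hZne hyfin.isBounded
      hZfin.isBounded
  have hcov : ∀ i ∈ At, ∃ p ∈ Z, dist (u i) p < g * d := by
    intro i hi
    rcases (hAtmem i).mp hi with ⟨k, hk, rfl⟩ | rfl | rfl
    · have hux : u (2*k) ∈ x := by
        rw [hxdef]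
        exact Finset.mem_coe.mpr (Finset.mem_image_of_mem u ((hAxmem _).mpr (Or.inl ⟨k, hk, rfl⟩)))
      exact Metric.exists_dist_lt_of_hausdorffDist_lt hux
        (by rwa [Metric.hausdorffDist_comm] at hZx) hExZ
    · have huy : u (2*m+4) ∈ y := by
        rw [hydef]
        exact Finset.mem_coe.mpr (Finset.mem_image_of_mem u ((hAymem _).mpr (Or.inr (Or.inl rfl))))
      exact Metric.exists_dist_lt_of_hausdorffDist_lt huy
        (by rwa [Metric.hausdorffDist_comm] at hZy) hEyZ
    · have huy : u (2*m+6) ∈ y := by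
        rw [hydef]
        exact Finset.mem_coe.mpr (Finset.mem_image_of_mem u ((hAymem _).mpr (Or.inr (Or.inr rfl))))
      exact Metric.exists_dist_lt_of_hausdorffDist_lt huy
        (by rwa [Metric.hausdorffDist_comm] at hZy) hEyZ
  have hcov' : ∀ i : ℕ, ∃ p : X, i ∈ At → (p ∈ Z ∧ dist (u i) p < g * d) := by
    intro i
    by_cases hi : i ∈ At
    · obtain ⟨p, hp1, hp2⟩ := hcov i hi
      exact ⟨p, fun _ => ⟨hp1, hp2⟩⟩
    · exact ⟨a, fun h => absurd h hi⟩
  choose c hc using hcov'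
  have heven : ∀ i ∈ At, ∃ k, i = 2*k := by
    intro i hi
    rcases (hAtmem i).mp hi with ⟨k, hk, rfl⟩ | rfl | rfl
    · exact ⟨k, rfl⟩
    · exact ⟨m+2, by ring⟩
    · exact ⟨m+3, by ring⟩
  have hinj : Set.InjOn c ↑At := by
    intro i hi j hj hij
    by_contra hne
    have hi' := hc i (Finset.mem_coe.mp hi)
    have hj' := hc j (Finset.mem_coe.mp hj)
    obtain ⟨ki, rfl⟩ := heven i (Finset.mem_coe.mp hi)
    obtain ⟨kj, rfl⟩ := heven j (Finset.mem_coe.mp hj)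
    have h2 : (2:ℝ) ≤ |((2*ki:ℕ):ℝ) - ((2*kj:ℕ):ℝ)| := by
      rcases Nat.lt_or_ge ki kj with h | h
      · have : (ki:ℝ) + 1 ≤ kj := by exact_mod_cast h
        push_cast
        rw [abs_of_nonpos (by linarith)]
        linarith
      · have hlt : kj < ki := by omega
        have : (kj:ℝ) + 1 ≤ ki := by exact_mod_cast hlt
        push_cast
        rw [abs_of_nonneg (by linarith)]
        linarith
    have hdij : dist (u (2*ki)) (u (2*kj)) = |((2*ki:ℕ):ℝ) - ((2*kj:ℕ):ℝ)| * (g * d) :=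
      hu _ _ (hAtle _ (Finset.mem_coe.mp hi)) (hAtle _ (Finset.mem_coe.mp hj))
    have htri : dist (u (2*ki)) (u (2*kj)) ≤
        dist (u (2*ki)) (c (2*ki)) + dist (c (2*kj)) (u (2*kj)) := by
      rw [hij]
      exact dist_triangle _ _ _
    have hd1 := hi'.2
    have hd2 := hj'.2
    rw [dist_comm (c (2*kj))] at htri
    have hgd : 0 < g * d := mul_pos hg hd
    nlinarith [abs_nonneg (((2*ki:ℕ):ℝ) - ((2*kj:ℕ):ℝ))]
  have hsub : ↑(At.image c) ⊆ Z := by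
    intro p hp
    obtain ⟨i, hi, rfl⟩ := Finset.mem_image.mp (Finset.mem_coe.mp hp)
    exact (hc i hi).1
  have hcard1 : (At.image c).card = At.card := Finset.card_image_of_injOn hinj
  have hAtcard : At.card = m + 4 := by
    rw [hAt, Finset.card_union_of_disjoint]
    · rw [Finset.card_image_of_injective _ (fun p q h => by omega)]
      simp
    · rw [Finset.disjoint_left]
      intro z hz hz2
      simp only [Finset.mem_image, Finset.mem_range] at hz
      simp only [Finset.mem_insert, Finset.mem_singleton] at hz2
      obtain ⟨k, hk, rfl⟩ := hz
      omega
  have hfinal : ((m+4 : ℕ) : ℕ∞) ≤ Z.encard := by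
    calc ((m+4 : ℕ) : ℕ∞) = ((At.image c).card : ℕ∞) := by rw [hcard1, hAtcard]
    _ = (↑(At.image c) : Set X).encard := (Set.encard_coe_eq_coe_finsetCard _).symm
    _ ≤ Z.encard := Set.encard_le_encard hsub
  have : (m+4 : ℕ) ≤ (m + 3 : ℕ) := by exact_mod_cast hfinal.trans hZcard
  omega
end
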